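/- arXiv:2305.04983 — 7 statements merged into one kernel-verified Lean document; each statement's English description precedes it below -/
import Mathlib

section
/- Let G be an additive abelian group, let s ≥ 1 and n, d ∈ ℕ. Every function f : (ZMod s)^n → G of junta-degree at most d admits a unique family of coefficients (g_a) ∈ G, indexed by the tuples a ∈ (ZMod s)^n with #a ≤ d, such that for all x ∈ (ZMod s)^n one has f(x) = Σ_{a : #a ≤ d} g_a · Π_{i : a_i ≠ 0} δ_{a_i}(x_i), where each product Π_{i : a_i ≠ 0} δ_{a_i}(x_i) is an integer (equal to 1 if x agrees with a on all coordinates i with a_i ≠ 0, and 0 otherwise). -/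
open Finset

/-- A function `f` on a finite product domain `∀ i, D i` with values in an additive
abelian group `G` has junta-degree at most `d` if it is a finite sum of functions,
each depending on at most `d` of the coordinates. -/
def JuntaDegLE {n : ℕ} {D : Fin n → Type*} {G : Type*} [AddCommGroup G]
    (d : ℕ) (f : (∀ i, D i) → G) : Prop :=
  ∃ (t : ℕ) (Ds : Fin t → Finset (Fin n)) (fs : Fin t → (∀ i, D i) → G),
    (∀ j, (Ds j).card ≤ d) ∧
    (∀ j (x y : ∀ i, D i), (∀ i ∈ Ds j, x i = y i) → fs j x = fs j y) ∧
    ∀ x, f x = ∑ j, fs j x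


set_option linter.unusedSectionVars false

section Helpers

variable {s n : ℕ} [NeZero s] {G : Type*} [AddCommGroup G]

def mySupp (a : Fin n → ZMod s) : Finset (Fin n) := Finset.univ.filter fun i => a i ≠ 0

def myRes (a : Fin n → ZMod s) (S : Finset (Fin n)) : Fin n → ZMod s :=
  fun i => if i ∈ S then a i else 0

def myChi (a x : Fin n → ZMod s) : ℤ :=
  ∏ i ∈ Finset.univ.filter (fun i => a i ≠ 0), (if x i = a i then (1 : ℤ) else 0)

def myCoeff (f : (Fin n → ZMod s) → G) (a : Fin n → ZMod s) : G :=
  ∑ S ∈ (mySupp a).powerset, ((-1 : ℤ) ^ ((mySupp a).card - S.card)) • f (myRes a S)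

lemma hammingNorm_eq (a : Fin n → ZMod s) : hammingNorm a = (mySupp a).card := rfl

lemma mem_mySupp {a : Fin n → ZMod s} {i : Fin n} : i ∈ mySupp a ↔ a i ≠ 0 := by
  simp [mySupp]

lemma myChi_eq (a x : Fin n → ZMod s) :
    myChi a x = if (∀ i, a i ≠ 0 → x i = a i) then 1 else 0 := by
  rw [myChi, Finset.prod_boole]
  congr 1
  simp [eq_iff_iff]

lemma mySupp_myRes (a : Fin n → ZMod s) (S : Finset (Fin n)) (hS : S ⊆ mySupp a) :
    mySupp (myRes a S) = S := by
  ext i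
  simp only [mem_mySupp, myRes]
  constructor
  · intro h
    by_contra hi
    simp [hi] at h
  · intro hi
    have := mem_mySupp.1 (hS hi)
    simp [hi, this]

lemma myRes_myRes (a : Fin n → ZMod s) (S T : Finset (Fin n)) (hTS : T ⊆ S) :
    myRes (myRes a S) T = myRes a T := by
  funext i
  by_cases hi : i ∈ T
  · simp [myRes, hi, hTS hi]
  · simp [myRes, hi]

lemma myRes_mySupp (a : Fin n → ZMod s) : myRes a (mySupp a) = a := by
  funext i
  by_cases hi : a i = 0
  · simp [myRes, mem_mySupp, hi]
  · simp [myRes, mem_mySupp, hi]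

lemma neg_one_pow_sub (k j : ℕ) (h : j ≤ k) : (-1 : ℤ) ^ (k - j) = (-1) ^ k * (-1) ^ j := by
  obtain ⟨m, rfl⟩ := Nat.exists_eq_add_of_le h
  rw [Nat.add_sub_cancel_left, ← pow_add, show j + m + j = m + 2 * j by ring, pow_add, pow_mul]
  simp

lemma powerset_filter_reindex {M : Type*} [AddCommMonoid M]
    (A T : Finset (Fin n)) (hT : T ⊆ A) (F : Finset (Fin n) → M) :
    ∑ S ∈ A.powerset.filter (fun S => T ⊆ S), F S
      = ∑ S' ∈ (A \ T).powerset, F (S' ∪ T) := by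
  refine Finset.sum_nbij' (fun S => S \ T) (fun S' => S' ∪ T) ?_ ?_ ?_ ?_ ?_
  · intro S hS
    simp only [mem_filter, mem_powerset] at hS
    exact mem_powerset.2 (sdiff_subset_sdiff hS.1 subset_rfl)
  · intro S' hS'
    simp only [mem_powerset] at hS'
    refine mem_filter.2 ⟨mem_powerset.2 (union_subset (hS'.trans sdiff_subset) hT),
      subset_union_right⟩
  · intro S hS
    simp only [mem_filter, mem_powerset] at hS
    show S \ T ∪ T = S
    exact sdiff_union_of_subset hS.2
  · intro S' hS'
    simp only [mem_powerset] at hS'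
    show (S' ∪ T) \ T = S'
    rw [union_sdiff_right]
    exact sdiff_eq_self_iff_disjoint.2 (disjoint_of_subset_left hS' sdiff_disjoint)
  · intro S hS
    simp only [mem_filter, mem_powerset] at hS
    show F S = F (S \ T ∪ T)
    rw [sdiff_union_of_subset hS.2]

lemma card_union_disjoint_of_subset_sdiff {A T S' : Finset (Fin n)} (hT : T ⊆ A)
    (hS' : S' ⊆ A \ T) : (S' ∪ T).card = S'.card + T.card :=
  card_union_of_disjoint (disjoint_of_subset_left hS' sdiff_disjoint)

lemma alt_sum (A T : Finset (Fin n)) (hT : T ⊆ A) :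
    ∑ S ∈ A.powerset.filter (fun S => T ⊆ S), (-1 : ℤ) ^ (A.card - S.card)
      = if T = A then 1 else 0 := by
  rw [powerset_filter_reindex A T hT]
  have hstep : ∀ S' ∈ (A \ T).powerset,
      (-1 : ℤ) ^ (A.card - (S' ∪ T).card) = (-1) ^ (A \ T).card * (-1) ^ S'.card := by
    intro S' hS'
    rw [mem_powerset] at hS'
    rw [card_union_disjoint_of_subset_sdiff hT hS']
    have h1 : (A \ T).card = A.card - T.card := card_sdiff_of_subset hT
    have h2 : S'.card ≤ (A \ T).card := card_le_card hS'
    have h3 : T.card ≤ A.card := card_le_card hT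
    have : A.card - (S'.card + T.card) = (A \ T).card - S'.card := by omega
    rw [this, neg_one_pow_sub _ _ h2]
  rw [Finset.sum_congr rfl hstep, ← Finset.mul_sum, Finset.sum_powerset_neg_one_pow_card]
  by_cases h : A \ T = ∅
  · have hTA : T = A := subset_antisymm hT (sdiff_eq_empty_iff_subset.1 h)
    simp [h, hTA]
  · have hTA : T ≠ A := fun he => h (by simp [he])
    simp [h, hTA]

lemma alt_sum2 (A T : Finset (Fin n)) (hT : T ⊆ A) :
    ∑ S ∈ A.powerset.filter (fun S => T ⊆ S), (-1 : ℤ) ^ (S.card - T.card)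
      = if T = A then 1 else 0 := by
  rw [powerset_filter_reindex A T hT]
  have hstep : ∀ S' ∈ (A \ T).powerset,
      (-1 : ℤ) ^ ((S' ∪ T).card - T.card) = (-1) ^ S'.card := by
    intro S' hS'
    rw [mem_powerset] at hS'
    rw [card_union_disjoint_of_subset_sdiff hT hS', Nat.add_sub_cancel]
  rw [Finset.sum_congr rfl hstep, Finset.sum_powerset_neg_one_pow_card]
  by_cases h : A \ T = ∅
  · have hTA : T = A := subset_antisymm hT (sdiff_eq_empty_iff_subset.1 h)
    simp [h, hTA]
  · have hTA : T ≠ A := fun he => h (by simp [he])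
    simp [h, hTA]

/-- Reconstruction: f is recovered from its coefficients along subsets of the support. -/
lemma reconstruct (f : (Fin n → ZMod s) → G) (x : Fin n → ZMod s) :
    ∑ S ∈ (mySupp x).powerset, myCoeff f (myRes x S) = f x := by
  have step : ∀ S ∈ (mySupp x).powerset, myCoeff f (myRes x S)
      = ∑ T ∈ S.powerset, ((-1 : ℤ) ^ (S.card - T.card)) • f (myRes x T) := by
    intro S hS
    rw [mem_powerset] at hS
    rw [myCoeff, mySupp_myRes x S hS]
    refine Finset.sum_congr rfl fun T hT => ?_
    rw [myRes_myRes x S T (mem_powerset.1 hT)]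
  rw [Finset.sum_congr rfl step]
  rw [Finset.sum_comm' (t' := (mySupp x).powerset)
    (s' := fun T => (mySupp x).powerset.filter (fun S => T ⊆ S))
    (by
      intro S T
      simp only [mem_powerset, mem_filter]
      constructor
      · rintro ⟨h1, h2⟩
        exact ⟨⟨h1, h2⟩, h2.trans h1⟩
      · rintro ⟨⟨h1, h2⟩, h3⟩
        exact ⟨h1, h2⟩)]
  have inner : ∀ T ∈ (mySupp x).powerset,
      (∑ S ∈ (mySupp x).powerset.filter (fun S => T ⊆ S),
        ((-1 : ℤ) ^ (S.card - T.card)) • f (myRes x T))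
      = if T = mySupp x then f x else 0 := by
    intro T hT
    rw [mem_powerset] at hT
    rw [← Finset.sum_smul, alt_sum2 (mySupp x) T hT]
    split
    · next h => rw [h, myRes_mySupp, one_smul]
    · rw [zero_smul]
  rw [Finset.sum_congr rfl inner, Finset.sum_ite_eq' (mySupp x).powerset]
  simp

end Helpers

section Part2

variable {s n : ℕ} [NeZero s] {G : Type*} [AddCommGroup G]

lemma myCoeff_sum {ι : Type*} [Fintype ι] (fs : ι → (Fin n → ZMod s) → G)
    (a : Fin n → ZMod s) :
    myCoeff (fun x => ∑ j, fs j x) a = ∑ j, myCoeff (fs j) a := by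
  simp only [myCoeff, smul_sum]
  rw [Finset.sum_comm]

lemma myCoeff_junta (f : (Fin n → ZMod s) → G) (T : Finset (Fin n))
    (hf : ∀ x y, (∀ i ∈ T, x i = y i) → f x = f y)
    (a : Fin n → ZMod s) (ha : T.card < (mySupp a).card) : myCoeff f a = 0 := by
  have hnot : ¬ mySupp a ⊆ T := fun h => absurd (card_le_card h) (by omega)
  obtain ⟨i, hia, hiT⟩ := Finset.not_subset.1 hnot
  have hins : insert i ((mySupp a).erase i) = mySupp a := insert_erase hia
  have hcard : ((mySupp a).erase i).card + 1 = (mySupp a).card := by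
    rw [card_erase_of_mem hia]
    have : 0 < (mySupp a).card := card_pos.2 ⟨i, hia⟩
    omega
  rw [myCoeff]
  rw [← hins, Finset.sum_powerset_insert (notMem_erase i _), ← Finset.sum_add_distrib]
  refine Finset.sum_eq_zero fun S hS => ?_
  rw [mem_powerset] at hS
  have hiS : i ∉ S := fun h => notMem_erase i _ (hS h)
  have hcins : (insert i S).card = S.card + 1 := card_insert_of_notMem hiS
  have hSle : S.card ≤ ((mySupp a).erase i).card := card_le_card hS
  have hfeq : f (myRes a S) = f (myRes a (insert i S)) := by
    refine hf _ _ fun j hj => ?_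
    have hji : j ≠ i := fun h => hiT (h ▸ hj)
    simp [myRes, Finset.mem_insert, hji]
  rw [hfeq, hcins]
  have hsign : (-1 : ℤ) ^ ((insert i ((mySupp a).erase i)).card - S.card)
      = -(-1 : ℤ) ^ ((insert i ((mySupp a).erase i)).card - (S.card + 1)) := by
    have hc : (insert i ((mySupp a).erase i)).card = ((mySupp a).erase i).card + 1 := by
      rw [hins]; omega
    rw [hc]
    have h1 : ((mySupp a).erase i).card + 1 - S.card
        = (((mySupp a).erase i).card + 1 - (S.card + 1)) + 1 := by omega
    rw [h1, pow_succ]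
    ring
  rw [hsign, ← add_smul]
  simp

lemma myCoeff_chi (a b : Fin n → ZMod s) (v : G) :
    myCoeff (fun x => myChi a x • v) b = if b = a then v else 0 := by
  have hsub : ∀ S ∈ (mySupp b).powerset, myChi a (myRes b S)
      = if (∀ i, a i ≠ 0 → b i = a i) ∧ mySupp a ⊆ S then 1 else 0 := by
    intro S hS
    rw [mem_powerset] at hS
    rw [myChi_eq]
    congr 1
    rw [eq_iff_iff]
    constructor
    · intro h
      constructor
      · intro i hi
        have := h i hi
        rw [myRes] at this
        by_cases hiS : i ∈ S
        · simpa [hiS] using this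
        · simp [hiS] at this
          exact absurd this.symm hi
      · intro i hi
        rw [mem_mySupp] at hi
        have := h i hi
        rw [myRes] at this
        by_cases hiS : i ∈ S
        · exact hiS
        · simp [hiS] at this
          exact absurd this.symm hi
    · rintro ⟨h1, h2⟩ i hi
      have hiS : i ∈ S := h2 (mem_mySupp.2 hi)
      simp [myRes, hiS, h1 i hi]
  rw [myCoeff]
  have hterm : ∀ S ∈ (mySupp b).powerset,
      ((-1 : ℤ) ^ ((mySupp b).card - S.card)) • (myChi a (myRes b S) • v)
      = ((-1 : ℤ) ^ ((mySupp b).card - S.card)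
          * (if (∀ i, a i ≠ 0 → b i = a i) ∧ mySupp a ⊆ S then 1 else 0)) • v := by
    intro S hS
    rw [smul_smul, hsub S hS]
  rw [Finset.sum_congr rfl hterm, ← Finset.sum_smul]
  by_cases hag : ∀ i, a i ≠ 0 → b i = a i
  · have hsupp : mySupp a ⊆ mySupp b := by
      intro i hi
      rw [mem_mySupp] at hi ⊢
      rw [hag i hi]
      exact hi
    have hc : ∑ S ∈ (mySupp b).powerset,
        (-1 : ℤ) ^ ((mySupp b).card - S.card)
          * (if (∀ i, a i ≠ 0 → b i = a i) ∧ mySupp a ⊆ S then 1 else 0)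
        = ∑ S ∈ (mySupp b).powerset.filter (fun S => mySupp a ⊆ S),
            (-1 : ℤ) ^ ((mySupp b).card - S.card) := by
      rw [Finset.sum_filter]
      refine Finset.sum_congr rfl fun S hS => ?_
      by_cases h : mySupp a ⊆ S
      · rw [if_pos ⟨hag, h⟩, mul_one, if_pos h]
      · rw [if_neg (fun hc => h hc.2), mul_zero, if_neg h]
    rw [hc, alt_sum (mySupp b) (mySupp a) hsupp]
    have hiff : mySupp a = mySupp b ↔ b = a := by
      constructor
      · intro h
        funext i
        by_cases hi : a i = 0
        · have : i ∉ mySupp b := by rw [← h, mem_mySupp]; simpa using hi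
          rw [mem_mySupp, not_not] at this
          rw [this, hi]
        · exact hag i hi
      · intro h
        rw [h]
    rw [if_congr hiff rfl rfl]
    split <;> simp
  · have hba : b ≠ a := fun h => hag (fun i hi => by rw [h])
    simp [hag, hba]

end Part2

theorem stmt0 {s n d : ℕ} [NeZero s] {G : Type*} [AddCommGroup G]
    (f : (Fin n → ZMod s) → G) (hf : JuntaDegLE d f) :
    ∃! g : {a : Fin n → ZMod s // hammingNorm a ≤ d} → G,
      ∀ x : Fin n → ZMod s,
        f x = ∑ a : {a : Fin n → ZMod s // hammingNorm a ≤ d},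
          (∏ i ∈ Finset.univ.filter (fun i => (a : Fin n → ZMod s) i ≠ 0),
            (if x i = (a : Fin n → ZMod s) i then (1 : ℤ) else 0)) • g a := by
  classical
  obtain ⟨t, Ds, fs, hcard, hdep, hsum⟩ := hf
  have hvanish : ∀ a : Fin n → ZMod s, d < hammingNorm a → myCoeff f a = 0 := by
    intro a ha
    have hfeq : f = fun x => ∑ j, fs j x := funext hsum
    rw [hfeq, myCoeff_sum]
    refine Finset.sum_eq_zero fun j _ => ?_
    exact myCoeff_junta (fs j) (Ds j) (hdep j) a
      (lt_of_le_of_lt (hcard j) (by rw [← hammingNorm_eq]; exact ha))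
  refine ⟨fun a => myCoeff f a.1, ?_, ?_⟩
  · intro x
    show f x = ∑ a : {a : Fin n → ZMod s // hammingNorm a ≤ d},
        myChi a.1 x • myCoeff f a.1
    have h1 : f x = ∑ S ∈ (mySupp x).powerset, myCoeff f (myRes x S) :=
      (reconstruct f x).symm
    have h2 : ∑ S ∈ (mySupp x).powerset.filter (fun S => S.card ≤ d),
        myCoeff f (myRes x S) = ∑ S ∈ (mySupp x).powerset, myCoeff f (myRes x S) := by
      refine Finset.sum_filter_of_ne fun S hS hne => ?_
      rw [mem_powerset] at hS
      by_contra hgt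
      exact hne (hvanish (myRes x S)
        (by rw [hammingNorm_eq, mySupp_myRes x S hS]; omega))
    have h3 : ∑ a : {a : Fin n → ZMod s // hammingNorm a ≤ d}, myChi a.1 x • myCoeff f a.1
        = ∑ a ∈ Finset.univ.filter
            (fun a : {a : Fin n → ZMod s // hammingNorm a ≤ d} =>
              ∀ i, a.1 i ≠ 0 → x i = a.1 i), myCoeff f a.1 := by
      rw [Finset.sum_filter]
      refine Finset.sum_congr rfl fun a _ => ?_
      rw [myChi_eq]
      split <;> simp
    have h4 : ∑ a ∈ Finset.univ.filter
          (fun a : {a : Fin n → ZMod s // hammingNorm a ≤ d} =>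
            ∀ i, a.1 i ≠ 0 → x i = a.1 i), myCoeff f a.1
        = ∑ S ∈ (mySupp x).powerset.filter (fun S => S.card ≤ d),
            myCoeff f (myRes x S) := by
      refine Finset.sum_bij' (fun a _ => mySupp a.1)
        (fun S hS => ⟨myRes x S, ?_⟩) ?_ ?_ ?_ ?_ ?_
      · simp only [mem_filter, mem_powerset] at hS
        rw [hammingNorm_eq, mySupp_myRes x S hS.1]
        exact hS.2
      · intro a ha
        simp only [mem_filter, mem_univ, true_and] at ha
        refine mem_filter.2 ⟨mem_powerset.2 fun i hi => ?_, ?_⟩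
        · rw [mem_mySupp] at hi
          rw [mem_mySupp, ha i hi]
          exact hi
        · rw [← hammingNorm_eq]
          exact a.2
      · intro S hS
        simp only [mem_filter, mem_powerset] at hS
        refine mem_filter.2 ⟨mem_univ _, fun i hi => ?_⟩
        simp only [myRes] at hi ⊢
        by_cases hiS : i ∈ S
        · simp [hiS]
        · simp [hiS] at hi
      · intro a ha
        simp only [mem_filter, mem_univ, true_and] at ha
        refine Subtype.ext ?_
        funext i
        by_cases hi : a.1 i = 0
        · simp [myRes, mem_mySupp, hi]
        · have himem : i ∈ mySupp a.1 := mem_mySupp.2 hi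
          simp only [myRes, himem, if_pos]
          first | exact ha i hi | exact (ha i hi).symm
      · intro S hS
        simp only [mem_filter, mem_powerset] at hS
        exact mySupp_myRes x S hS.1
      · intro a ha
        simp only [mem_filter, mem_univ, true_and] at ha
        congr 1
        funext i
        by_cases hi : a.1 i = 0
        · simp [myRes, mem_mySupp, hi]
        · have himem : i ∈ mySupp a.1 := mem_mySupp.2 hi
          simp only [myRes, himem, if_pos]
          first | exact ha i hi | exact (ha i hi).symm
    rw [h3, h4, h2, ← h1]
  · intro g hg
    funext b
    have hfeq : f = fun x => ∑ a : {a : Fin n → ZMod s // hammingNorm a ≤ d},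
        myChi a.1 x • g a := funext hg
    have h1 : myCoeff f b.1 = ∑ a : {a : Fin n → ZMod s // hammingNorm a ≤ d},
        myCoeff (fun x => myChi a.1 x • g a) b.1 := by
      rw [hfeq, myCoeff_sum]
    have h2 : ∀ a : {a : Fin n → ZMod s // hammingNorm a ≤ d},
        myCoeff (fun x => myChi a.1 x • g a) b.1 = if a = b then g a else 0 := by
      intro a
      rw [myCoeff_chi a.1 b.1 (g a)]
      congr 1
      rw [eq_iff_iff]
      constructor
      · intro h
        exact Subtype.ext h.symm
      · intro h
        rw [h]
    show g b = myCoeff f b.1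
    rw [h1, Finset.sum_congr rfl fun a _ => h2 a, Finset.sum_ite_eq' Finset.univ b g]
    simp
end

section
/- Let G be an additive abelian group, let s ≥ 1 and d ≤ n. If f : (ZMod s)^n → G has junta-degree at most d and f is not identically zero, then the number of points x ∈ (ZMod s)^n with f(x) ≠ 0 is at least s^{n−d}. -/
open scoped Classical

section Aux

variable {s : ℕ} [NeZero s] {G : Type*} [AddCommGroup G]

lemma junta_const {n : ℕ} (f : (Fin n → ZMod s) → G) (hf : JuntaDegLE 0 f) :
    ∀ x y, f x = f y := by
  obtain ⟨t, Ds, fs, hcard, hdep, hsum⟩ := hf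
  intro x y
  rw [hsum x, hsum y]
  refine Finset.sum_congr rfl fun j _ => ?_
  apply hdep
  intro i hi
  have := hcard j
  have : Ds j = ∅ := Finset.card_eq_zero.mp (Nat.le_zero.mp this)
  simp [this] at hi

lemma junta_restrict {n d : ℕ} (f : (Fin (n+1) → ZMod s) → G) (c : ZMod s)
    (hf : JuntaDegLE d f) :
    JuntaDegLE d (fun y : Fin n → ZMod s => f (Fin.cons c y)) := by
  obtain ⟨t, Ds, fs, hcard, hdep, hsum⟩ := hf
  refine ⟨t, fun j => Finset.univ.filter fun i : Fin n => i.succ ∈ Ds j,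
    fun j y => fs j (Fin.cons c y), fun j => ?_, fun j y y' h => ?_, fun y => hsum _⟩
  · calc (Finset.univ.filter fun i : Fin n => i.succ ∈ Ds j).card
        ≤ (Ds j).card := by
          apply Finset.card_le_card_of_injOn (fun i => i.succ)
          · intro i hi
            exact (Finset.mem_filter.mp hi).2
          · exact fun a _ b _ hab => Fin.succ_injective _ hab
      _ ≤ d := hcard j
  · apply hdep
    intro i hi
    induction i using Fin.cases with
    | zero => simp
    | succ k =>
      simp only [Fin.cons_succ]
      exact h k (Finset.mem_filter.mpr ⟨Finset.mem_univ _, hi⟩)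

lemma junta_deriv {n d : ℕ} (f : (Fin (n+1) → ZMod s) → G) (a b : ZMod s)
    (hf : JuntaDegLE d f) :
    JuntaDegLE (d - 1) (fun y : Fin n → ZMod s => f (Fin.cons a y) - f (Fin.cons b y)) := by
  obtain ⟨t, Ds, fs, hcard, hdep, hsum⟩ := hf
  refine ⟨t,
    fun j => if (0 : Fin (n+1)) ∈ Ds j then
      Finset.univ.filter (fun i : Fin n => i.succ ∈ Ds j) else ∅,
    fun j => if (0 : Fin (n+1)) ∈ Ds j then
      (fun y => fs j (Fin.cons a y) - fs j (Fin.cons b y)) else 0,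
    fun j => ?_, fun j y y' h => ?_, fun y => ?_⟩
  · by_cases h0 : (0 : Fin (n+1)) ∈ Ds j
    · simp only [h0, if_true]
      have h1 : (Finset.univ.filter (fun i : Fin n => i.succ ∈ Ds j)).card
          ≤ ((Ds j).erase 0).card := by
        apply Finset.card_le_card_of_injOn (fun i => i.succ)
        · intro i hi
          exact Finset.mem_erase.mpr ⟨Fin.succ_ne_zero i, (Finset.mem_filter.mp hi).2⟩
        · exact fun a _ b _ hab => Fin.succ_injective _ hab
      have h2 : ((Ds j).erase 0).card = (Ds j).card - 1 := Finset.card_erase_of_mem h0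
      have h3 := hcard j
      omega
    · simp [h0]
  · by_cases h0 : (0 : Fin (n+1)) ∈ Ds j
    · simp only [h0, if_true] at h ⊢
      have key : ∀ c : ZMod s, fs j (Fin.cons c y) = fs j (Fin.cons c y') := by
        intro c
        apply hdep
        intro i hi
        induction i using Fin.cases with
        | zero => simp
        | succ k =>
          simp only [Fin.cons_succ]
          exact h k (Finset.mem_filter.mpr ⟨Finset.mem_univ _, hi⟩)
      rw [key a, key b]
    · simp [h0]
  · have e1 : ∀ j, ((0 : Fin (n+1)) ∉ Ds j) → fs j (Fin.cons a y) = fs j (Fin.cons b y) := by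
      intro j h0
      apply hdep
      intro i hi
      induction i using Fin.cases with
      | zero => exact absurd hi h0
      | succ k => simp only [Fin.cons_succ]
    simp only [hsum, ← Finset.sum_sub_distrib]
    refine Finset.sum_congr rfl fun j _ => ?_
    by_cases h0 : (0 : Fin (n+1)) ∈ Ds j
    · simp [h0]
    · simp [h0, e1 j h0]

lemma key_lemma : ∀ n : ℕ, ∀ d : ℕ, d ≤ n → ∀ f : (Fin n → ZMod s) → G,
    JuntaDegLE d f → (∃ x, f x ≠ 0) →
    (s : ℕ) ^ (n - d) ≤ (Finset.univ.filter fun x : Fin n → ZMod s => f x ≠ 0).card := by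
  intro n
  induction n with
  | zero =>
    intro d hd f hf ⟨x, hx⟩
    have : x ∈ Finset.univ.filter fun x : Fin 0 → ZMod s => f x ≠ 0 :=
      Finset.mem_filter.mpr ⟨Finset.mem_univ _, hx⟩
    have hpos := Finset.card_pos.mpr ⟨x, this⟩
    have h1 : (s : ℕ) ^ (0 - d) = 1 := by
      rw [Nat.le_zero.mp hd]; rfl
    rw [h1]
    exact hpos
  | succ n IH =>
    intro d hd f hf hne
    obtain ⟨x0, hx0⟩ := hne
    -- the support is nonempty
    have hmem : x0 ∈ Finset.univ.filter fun x : Fin (n+1) → ZMod s => f x ≠ 0 := by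
      simp [hx0]
    rcases Nat.eq_zero_or_pos d with rfl | hd1
    · -- f is a nonzero constant
      have hconst := junta_const f hf
      have : (Finset.univ.filter fun x : Fin (n+1) → ZMod s => f x ≠ 0) = Finset.univ := by
        refine Finset.eq_univ_of_forall fun x => ?_
        simp only [Finset.mem_filter, Finset.mem_univ, true_and]
        rw [hconst x x0]; exact hx0
      rw [this, Finset.card_univ]
      simp [Fintype.card_fun, ZMod.card]
    by_cases hdtop : d = n + 1
    · subst hdtop
      simpa using Finset.card_pos.mpr ⟨x0, hmem⟩
    have hd' : d ≤ n := by omega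
    by_cases hA : ∀ (y : Fin n → ZMod s) (c : ZMod s), f (Fin.cons c y) = f (Fin.cons 0 y)
    · -- f does not depend on the first coordinate
      set g : (Fin n → ZMod s) → G := fun y => f (Fin.cons 0 y) with hg
      have hgj : JuntaDegLE d g := junta_restrict f 0 hf
      have hgne : ∃ y, g y ≠ 0 := by
        refine ⟨Fin.tail x0, ?_⟩
        have : f (Fin.cons (x0 0) (Fin.tail x0)) = g (Fin.tail x0) := hA _ _
        rw [hg]
        simp only []
        rw [← hA (Fin.tail x0) (x0 0), Fin.cons_self_tail]
        exact hx0
      have hIH := IH d hd' g hgj hgne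
      have hcardeq : (Finset.univ.filter fun x : Fin (n+1) → ZMod s => f x ≠ 0).card
          = s * (Finset.univ.filter fun y : Fin n → ZMod s => g y ≠ 0).card := by
        rw [← Fintype.card_subtype, ← Fintype.card_subtype]
        have e : {x : Fin (n+1) → ZMod s // f x ≠ 0}
            ≃ ZMod s × {y : Fin n → ZMod s // g y ≠ 0} :=
          { toFun := fun x => (x.1 0, ⟨Fin.tail x.1, by
              have hx := x.2
              have h1 : f x.1 = g (Fin.tail x.1) := by
                conv_lhs => rw [← Fin.cons_self_tail x.1]
                exact hA _ _
              rw [h1] at hx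
              exact hx⟩)
            invFun := fun p => ⟨Fin.cons p.1 p.2.1, by
              have := p.2.2
              rw [show f (Fin.cons p.1 p.2.1) = g p.2.1 from hA _ _]
              exact this⟩
            left_inv := fun x => Subtype.ext (Fin.cons_self_tail x.1)
            right_inv := fun p => by
              refine Prod.ext ?_ (Subtype.ext ?_)
              · simp
              · simp [Fin.tail_cons] }
        rw [Fintype.card_congr e, Fintype.card_prod, ZMod.card]
      rw [hcardeq]
      have hexp : n + 1 - d = (n - d) + 1 := by omega
      rw [hexp, pow_succ, mul_comm]
      exact Nat.mul_le_mul_left s hIH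
    · -- f depends on the first coordinate
      push_neg at hA
      obtain ⟨y0, c0, hy0⟩ := hA
      set h : (Fin n → ZMod s) → G :=
        fun y => f (Fin.cons c0 y) - f (Fin.cons 0 y) with hh
      have hhj : JuntaDegLE (d - 1) h := junta_deriv f c0 0 hf
      have hhne : ∃ y, h y ≠ 0 := ⟨y0, sub_ne_zero.mpr hy0⟩
      have hIH := IH (d - 1) (by omega) h hhj hhne
      have hexp : n - (d - 1) = n + 1 - d := by omega
      rw [hexp] at hIH
      refine le_trans hIH ?_
      set φ : (Fin n → ZMod s) → (Fin (n+1) → ZMod s) :=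
        fun y => if f (Fin.cons c0 y) = 0 then Fin.cons (0 : ZMod s) y else Fin.cons c0 y
        with hφ
      have htail : ∀ y, Fin.tail (φ y) = y := by
        intro y
        rw [hφ]
        simp only []
        split <;> simp [Fin.tail_cons]
      apply Finset.card_le_card_of_injOn φ
      · intro y hy
        simp only [Finset.mem_coe, Finset.mem_filter, Finset.mem_univ, true_and] at hy ⊢
        rw [hφ]
        simp only []
        split
        · rename_i h0
          intro hcontra
          apply hy
          rw [hh]
          simp [h0, hcontra]
        · rename_i h0
          exact h0
      · intro y _ y' _ hyy'
        have := congrArg Fin.tail hyy'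
        rwa [htail, htail] at this

end Aux

theorem stmt1 {s n d : ℕ} [NeZero s] (hdn : d ≤ n) {G : Type*} [AddCommGroup G]
    (f : (Fin n → ZMod s) → G) (hf : JuntaDegLE d f) (hne : ∃ x, f x ≠ 0) :
    s ^ (n - d) ≤ (Finset.univ.filter (fun x : Fin n → ZMod s => f x ≠ 0)).card := by
  exact key_lemma n d hdn f hf hne
end

section
/- Let G be an additive abelian group, s ≥ 1, r ≥ 2, 1 ≤ L ≤ r−1, and d ∈ ℕ. Every function Q : (ZMod s)^r → G of junta-degree at most d admits a unique family of coefficients (g_a) ∈ G, indexed by tuples a ∈ (ZMod s)^r with #a ≤ d, such that for all x ∈ (ZMod s)^r, Q(x) = Σ_{a : #a ≤ d} g_a · [ Π_{1 ≤ i ≤ L : a_i ≠ 0} (δ_{a_i}(x_i) − δ_{a_i}(x_r)) · Π_{L < i ≤ r : a_i ≠ 0} δ_{a_i}(x_i) ], where the bracketed product is an integer and · denotes integer scalar multiplication in G. -/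
open Finset

set_option linter.unusedSectionVars false
namespace Stmt7

variable {r s : ℕ} [NeZero s]

/-- indicator: `dd v u = 1` if `u = v` else `0`. -/
def dd (v u : ZMod s) : ℤ := if u = v then 1 else 0

lemma dd_self (v : ZMod s) : dd v v = 1 := if_pos rfl

lemma dd_mem (v u : ZMod s) : dd v u = 0 ∨ dd v u = 1 := by
  unfold dd; split <;> simp

lemma dd_mul_self (v u : ZMod s) : dd v u * dd v u = dd v u := by
  rcases dd_mem v u with h | h <;> rw [h] <;> ring

lemma dd_pow (v u : ZMod s) {n : ℕ} (hn : n ≠ 0) : dd v u ^ n = dd v u := by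
  rcases dd_mem v u with h | h <;> rw [h]
  · exact zero_pow hn
  · exact one_pow n

def Fa (L : ℕ) (a : Fin r → ZMod s) : Finset (Fin r) :=
  univ.filter (fun i => (i : ℕ) < L ∧ a i ≠ 0)

def Ga (L : ℕ) (a : Fin r → ZMod s) : Finset (Fin r) :=
  univ.filter (fun i => L ≤ (i : ℕ) ∧ a i ≠ 0)

def supp (a : Fin r → ZMod s) : Finset (Fin r) := univ.filter (fun i => a i ≠ 0)

lemma hammingNorm_eq_card_supp (a : Fin r → ZMod s) : hammingNorm a = (supp a).card := rfl

lemma supp_eq_union (L : ℕ) (a : Fin r → ZMod s) : supp a = Fa L a ∪ Ga L a := by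
  ext i
  simp only [supp, Fa, Ga, mem_filter, mem_union, mem_univ, true_and]
  constructor
  · intro h
    rcases lt_or_ge (i : ℕ) L with h' | h'
    · exact Or.inl ⟨h', h⟩
    · exact Or.inr ⟨h', h⟩
  · rintro (⟨_, h⟩ | ⟨_, h⟩) <;> exact h

lemma disj_FaGa (L : ℕ) (a : Fin r → ZMod s) : Disjoint (Fa L a) (Ga L a) := by
  rw [Finset.disjoint_left]
  intro i hi hi'
  simp [Fa, Ga] at hi hi'
  omega

/-- the plain indicator function -/
def Ea (a : Fin r → ZMod s) : (Fin r → ZMod s) → ℤ :=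
  fun x => ∏ i ∈ supp a, dd (a i) (x i)

/-- the shifted basis function -/
def Ba (L : ℕ) (z : Fin r) (a : Fin r → ZMod s) : (Fin r → ZMod s) → ℤ :=
  fun x => (∏ i ∈ Fa L a, (dd (a i) (x i) - dd (a i) (x z)))
    * ∏ i ∈ Ga L a, dd (a i) (x i)

lemma Ea_apply_eq (L : ℕ) (a x : Fin r → ZMod s) :
    Ea a x = (∏ i ∈ Fa L a, dd (a i) (x i)) * ∏ i ∈ Ga L a, dd (a i) (x i) := by
  rw [Ea, supp_eq_union L a, prod_union (disj_FaGa L a)]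

lemma Ea_self (a : Fin r → ZMod s) : Ea a a = 1 := by
  rw [Ea]
  exact prod_eq_one (fun i _ => dd_self (a i))

lemma Ea_ne_zero {a x : Fin r → ZMod s} (h : Ea a x ≠ 0) :
    ∀ i, a i ≠ 0 → x i = a i := by
  intro i hi
  by_contra hxi
  exact h (prod_eq_zero (i := i) (by simp [supp, hi]) (by simp [dd, hxi]))

lemma norm_le_of_extends {a b : Fin r → ZMod s} (h : ∀ i, a i ≠ 0 → b i = a i) :
    hammingNorm a ≤ hammingNorm b := by
  apply card_le_card
  intro i hi
  simp only [supp, mem_filter, mem_univ, true_and] at hi ⊢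
  rw [h i hi]; exact hi

lemma eq_of_extends_of_norm_le {a b : Fin r → ZMod s} (h : ∀ i, a i ≠ 0 → b i = a i)
    (hn : hammingNorm b ≤ hammingNorm a) : a = b := by
  have hsub : supp a ⊆ supp b := by
    intro i hi
    simp only [supp, mem_filter, mem_univ, true_and] at hi ⊢
    rw [h i hi]; exact hi
  have : supp a = supp b := Finset.eq_of_subset_of_card_le hsub hn
  funext i
  by_cases hi : a i ≠ 0
  · exact (h i hi).symm
  · push_neg at hi
    have : i ∉ supp b := by rw [← this]; simp [supp, hi]
    simp only [supp, mem_filter, mem_univ, true_and, not_not] at this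
    rw [hi, this]

/-- measure for the triangular induction -/
def mu (L : ℕ) (a : Fin r → ZMod s) : ℕ := (r + 1) * hammingNorm a + (Fa L a).card

end Stmt7
namespace Stmt7

variable {r s : ℕ} [NeZero s]

lemma mu_zero (L : ℕ) : mu L (0 : Fin r → ZMod s) = 0 := by
  simp [mu, Fa, hammingNorm]

lemma term_eq (L : ℕ) (z : Fin r) (hz : L ≤ (z : ℕ)) (a : Fin r → ZMod s)
    (S : Finset (Fin r)) (hS : S ⊆ Fa L a) (hne : S.Nonempty) :
    ∃ (c : ℤ) (a' : Fin r → ZMod s),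
      hammingNorm a' ≤ hammingNorm a ∧ mu L a' < mu L a ∧
      ∀ x, (∏ i ∈ S, -dd (a i) (x z)) *
          ((∏ i ∈ Fa L a \ S, dd (a i) (x i)) * ∏ i ∈ Ga L a, dd (a i) (x i))
        = c * Ea a' x := by
  obtain ⟨i₀, hi₀⟩ := hne
  have hi₀F : (i₀ : ℕ) < L ∧ a i₀ ≠ 0 := by
    have := hS hi₀; simpa [Fa] using this
  set v := a i₀ with hv
  have hvne : v ≠ 0 := hi₀F.2
  have hSsupp : S ⊆ supp a := by
    intro i hi
    have := hS hi
    simp only [Fa, mem_filter, mem_univ, true_and] at this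
    simp [supp, this.2]
  have hScard : 1 ≤ S.card := Finset.card_pos.mpr ⟨i₀, hi₀⟩
  have hmupos : 0 < mu L a := by
    have h1 : 1 ≤ hammingNorm a := Finset.card_pos.mpr ⟨i₀, hSsupp hi₀⟩
    have h2 : (r + 1) * 1 ≤ (r + 1) * hammingNorm a := Nat.mul_le_mul_left _ h1
    unfold mu; omega
  have hnorms : 1 ≤ hammingNorm a := Finset.card_pos.mpr ⟨i₀, hSsupp hi₀⟩
  have hzS : z ∉ S := by
    intro hzmem
    have := hS hzmem
    simp only [Fa, mem_filter, mem_univ, true_and] at this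
    omega
  have hFacard : S.card ≤ (Fa L a).card := card_le_card hS
  by_cases hall : ∀ j ∈ S, a j = v
  · by_cases hz0 : a z = 0
    · -- main subcase: a z = 0
      set a' : Fin r → ZMod s := fun i => if i = z then v else if i ∈ S then 0 else a i
        with ha'
      have hzsupp : z ∉ supp a := by simp [supp, hz0]
      have hsupp : supp a' = insert z (supp a \ S) := by
        ext i
        by_cases hiz : i = z
        · subst hiz; simp [supp, ha', hvne]
        · by_cases hiS : i ∈ S <;>
            simp [supp, ha', hiz, hiS, fun h => hiz (h : i = z)]
      have hnorm' : hammingNorm a' ≤ hammingNorm a := by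
        rw [hammingNorm_eq_card_supp, hammingNorm_eq_card_supp, hsupp,
          card_insert_of_notMem (by simp [hzsupp]), card_sdiff_of_subset hSsupp]
        have hcS := card_le_card hSsupp
        omega
      have hFa' : Fa L a' = Fa L a \ S := by
        ext i
        by_cases hiz : i = z
        · subst hiz
          simp only [Fa, mem_filter, mem_sdiff, mem_univ, true_and]
          constructor
          · intro h; omega
          · intro h; exact absurd h.1.1 (by omega)
        · by_cases hiS : i ∈ S
          · have hiL : (i : ℕ) < L ∧ a i ≠ 0 := by
              have := hS hiS; simpa [Fa] using this
            simp [Fa, ha', hiz, hiS]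
          · simp [Fa, ha', hiz, hiS]
      have hmu' : mu L a' < mu L a := by
        have h2 : (r + 1) * hammingNorm a' ≤ (r + 1) * hammingNorm a :=
          Nat.mul_le_mul_left _ hnorm'
        have h3 : (Fa L a').card = (Fa L a).card - S.card := by
          rw [hFa', card_sdiff_of_subset hS]
        unfold mu; omega
      refine ⟨(-1) ^ S.card, a', hnorm', hmu', fun x => ?_⟩
      have step1 : (∏ i ∈ S, -dd (a i) (x z)) = (-1) ^ S.card * dd v (x z) := by
        rw [prod_congr rfl (fun j hj => by rw [hall j hj]), prod_const, neg_pow,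
          dd_pow v (x z) (Nat.one_le_iff_ne_zero.mp hScard)]
      have hEa' : Ea a' x = dd v (x z) *
          ∏ i ∈ supp a \ S, dd (a i) (x i) := by
        rw [Ea, hsupp, prod_insert (by simp [hzsupp])]
        congr 1
        · simp [ha']
        · refine prod_congr rfl (fun i hi => ?_)
          simp only [mem_sdiff] at hi
          have hiz : i ≠ z := fun h => hzsupp (h ▸ hi.1)
          simp [ha', hiz, hi.2]
      have hsplit : supp a \ S = (Fa L a \ S) ∪ Ga L a := by
        rw [supp_eq_union L a, union_sdiff_distrib,
          Finset.sdiff_eq_self_of_disjoint ((disj_FaGa L a).symm.mono_right hS)]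
      have hdisj : Disjoint (Fa L a \ S) (Ga L a) :=
        (disj_FaGa L a).mono_left (sdiff_subset)
      rw [step1, hEa', hsplit, prod_union hdisj]
      ring
    · by_cases hzv : a z = v
      · -- main subcase: a z = v ≠ 0
        set a' : Fin r → ZMod s := fun i => if i ∈ S then 0 else a i with ha'
        have hsupp : supp a' = supp a \ S := by
          ext i; by_cases hiS : i ∈ S <;> simp [supp, ha', hiS]
        have hnorm' : hammingNorm a' + S.card = hammingNorm a := by
          rw [hammingNorm_eq_card_supp, hammingNorm_eq_card_supp, hsupp, card_sdiff_of_subset hSsupp]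
          have hcS := card_le_card hSsupp
          omega
      -- (mu)
        have hnorm'' : hammingNorm a' ≤ hammingNorm a := by omega
        have hmu' : mu L a' < mu L a := by
          have h1 : hammingNorm a' + 1 ≤ hammingNorm a := by omega
          have h2 : (r + 1) * (hammingNorm a' + 1) ≤ (r + 1) * hammingNorm a :=
            Nat.mul_le_mul_left _ h1
          have h3 : (Fa L a').card ≤ r := by
            have := card_le_card (subset_univ (Fa L a'))
            simpa using this
          have h4 : (r + 1) * (hammingNorm a' + 1)
              = (r + 1) * hammingNorm a' + (r + 1) := by ring
          unfold mu; omega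
        refine ⟨(-1) ^ S.card, a', hnorm'', hmu', fun x => ?_⟩
        have step1 : (∏ i ∈ S, -dd (a i) (x z)) = (-1) ^ S.card * dd v (x z) := by
          rw [prod_congr rfl (fun j hj => by rw [hall j hj]), prod_const, neg_pow,
            dd_pow v (x z) (Nat.one_le_iff_ne_zero.mp hScard)]
        have hEa' : Ea a' x = ∏ i ∈ supp a \ S, dd (a i) (x i) := by
          rw [Ea, hsupp]
          refine prod_congr rfl (fun i hi => ?_)
          simp only [mem_sdiff] at hi
          simp [ha', hi.2]
        have hsplit : supp a \ S = (Fa L a \ S) ∪ Ga L a := by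
          rw [supp_eq_union L a, union_sdiff_distrib,
            Finset.sdiff_eq_self_of_disjoint ((disj_FaGa L a).symm.mono_right hS)]
        have hdisj : Disjoint (Fa L a \ S) (Ga L a) :=
          (disj_FaGa L a).mono_left (sdiff_subset)
        have hzGa : z ∈ Ga L a := by simp [Ga, hz, hz0]
        have step3 : dd v (x z) * ∏ i ∈ Ga L a, dd (a i) (x i)
            = ∏ i ∈ Ga L a, dd (a i) (x i) := by
          rw [← Finset.mul_prod_erase (Ga L a) _ hzGa, hzv, ← mul_assoc, dd_mul_self]
        rw [step1, hEa', hsplit, prod_union hdisj]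
        calc (-1) ^ S.card * dd v (x z) *
              ((∏ i ∈ Fa L a \ S, dd (a i) (x i)) * ∏ i ∈ Ga L a, dd (a i) (x i))
            = (-1) ^ S.card * ((∏ i ∈ Fa L a \ S, dd (a i) (x i)) *
                (dd v (x z) * ∏ i ∈ Ga L a, dd (a i) (x i))) := by ring
          _ = _ := by rw [step3]
      · -- degenerate: a z ∉ {0, v}
        refine ⟨0, 0, by simp [hammingNorm], by rw [mu_zero]; exact hmupos, fun x => ?_⟩
        rw [zero_mul]
        by_cases hxz : x z = v
        · have hzGa : z ∈ Ga L a := by simp [Ga, hz, hz0]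
          have : dd (a z) (x z) = 0 := by
            rw [dd, if_neg]; rw [hxz]; exact fun h => hzv h.symm
          rw [prod_eq_zero hzGa this, mul_zero, mul_zero]
        · have : -dd (a i₀) (x z) = 0 := by
            rw [dd, ← hv, if_neg hxz, neg_zero]
          rw [prod_eq_zero hi₀ this, zero_mul]
  · -- degenerate: values on S not all equal
    push_neg at hall
    obtain ⟨j, hj, hjv⟩ := hall
    refine ⟨0, 0, by simp [hammingNorm], by rw [mu_zero]; exact hmupos, fun x => ?_⟩
    rw [zero_mul]
    by_cases hxz : x z = v
    · have : -dd (a j) (x z) = 0 := by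
        rw [dd, if_neg, neg_zero]; rw [hxz]; exact fun h => hjv h.symm
      rw [prod_eq_zero hj this, zero_mul]
    · have : -dd (a i₀) (x z) = 0 := by
        rw [dd, ← hv, if_neg hxz, neg_zero]
      rw [prod_eq_zero hi₀ this, zero_mul]

end Stmt7
namespace Stmt7

variable {r s : ℕ} [NeZero s]

/-- the set of basis functions -/
def BaSet (L : ℕ) (z : Fin r) (d : ℕ) : Set ((Fin r → ZMod s) → ℤ) :=
  {f | ∃ b : Fin r → ZMod s, hammingNorm b ≤ d ∧ f = Ba L z b}

lemma Ba_expand (L : ℕ) (z : Fin r) (a : Fin r → ZMod s) (x : Fin r → ZMod s) :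
    Ba L z a x = ∑ S ∈ (Fa L a).powerset,
      (∏ i ∈ S, -dd (a i) (x z)) *
        ((∏ i ∈ Fa L a \ S, dd (a i) (x i)) * ∏ i ∈ Ga L a, dd (a i) (x i)) := by
  rw [Ba]
  have : (∏ i ∈ Fa L a, (dd (a i) (x i) - dd (a i) (x z)))
      = ∑ S ∈ (Fa L a).powerset, (∏ i ∈ S, -dd (a i) (x z)) *
          ∏ i ∈ Fa L a \ S, dd (a i) (x i) := by
    rw [← Finset.prod_add]
    exact prod_congr rfl (fun i _ => by ring)
  rw [this, Finset.sum_mul]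
  exact sum_congr rfl (fun S _ => by ring)

lemma Ea_mem_span (L : ℕ) (z : Fin r) (hz : L ≤ (z : ℕ)) (d : ℕ) :
    ∀ (n : ℕ) (a : Fin r → ZMod s), mu L a ≤ n → hammingNorm a ≤ d →
      Ea a ∈ Submodule.span ℤ (BaSet L z d) := by
  intro n
  induction n using Nat.strong_induction_on with
  | _ n ih =>
    intro a hmu hnorm
    have hBa : Ba L z a ∈ Submodule.span ℤ (BaSet L z d) :=
      Submodule.subset_span ⟨a, hnorm, rfl⟩
    have hexp : Ea a = Ba L z a - ∑ S ∈ (Fa L a).powerset.erase ∅,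
        (fun x => (∏ i ∈ S, -dd (a i) (x z)) *
          ((∏ i ∈ Fa L a \ S, dd (a i) (x i)) * ∏ i ∈ Ga L a, dd (a i) (x i))) := by
      funext x
      have h0 : (∅ : Finset (Fin r)) ∈ (Fa L a).powerset := by simp
      have := Finset.sum_erase_add ((Fa L a).powerset)
        (fun S => (∏ i ∈ S, -dd (a i) (x z)) *
          ((∏ i ∈ Fa L a \ S, dd (a i) (x i)) * ∏ i ∈ Ga L a, dd (a i) (x i))) h0
      simp only [Pi.sub_apply, Finset.sum_apply]
      rw [Ba_expand L z a x, ← this]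
      simp [Ea_apply_eq L a x]
    rw [hexp]
    refine Submodule.sub_mem _ hBa (Submodule.sum_mem _ (fun S hSmem => ?_))
    have hSsub : S ⊆ Fa L a := by
      have := Finset.mem_of_mem_erase hSmem
      simpa [Finset.mem_powerset] using this
    have hSne : S.Nonempty :=
      Finset.nonempty_of_ne_empty (Finset.ne_of_mem_erase hSmem)
    obtain ⟨c, a', hnorm', hmu', hterm⟩ := term_eq L z hz a S hSsub hSne
    have : (fun x => (∏ i ∈ S, -dd (a i) (x z)) *
        ((∏ i ∈ Fa L a \ S, dd (a i) (x i)) * ∏ i ∈ Ga L a, dd (a i) (x i)))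
        = c • Ea a' := by
      funext x
      simp [hterm x]
    rw [this]
    exact Submodule.smul_mem _ _
      (ih (mu L a') (lt_of_lt_of_le hmu' hmu) a' le_rfl (le_trans hnorm' hnorm))

end Stmt7
namespace Stmt7

variable {r s : ℕ} [NeZero s]

lemma deltaProd_mem_span (L : ℕ) (z : Fin r) (hz : L ≤ (z : ℕ)) (d : ℕ) :
    ∀ (n : ℕ) (T : Finset (Fin r)) (y : Fin r → ZMod s),
      2 * T.card + (T.filter (fun i => y i = 0)).card ≤ n → T.card ≤ d →
      (fun x => ∏ i ∈ T, dd (y i) (x i)) ∈ Submodule.span ℤ (BaSet L z d) := by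
  intro n
  induction n using Nat.strong_induction_on with
  | _ n ih =>
    intro T y hmeas hcard
    by_cases hzero : ∃ i ∈ T, y i = 0
    · obtain ⟨i₀, hi₀T, hi₀⟩ := hzero
      have key : (fun x : Fin r → ZMod s => ∏ i ∈ T, dd (y i) (x i)) =
          (fun x : Fin r → ZMod s => ∏ i ∈ T.erase i₀, dd (y i) (x i)) -
          ∑ v ∈ (univ : Finset (ZMod s)).erase 0,
            (fun x : Fin r → ZMod s => ∏ i ∈ T, dd (Function.update y i₀ v i) (x i)) := by
        funext x
        simp only [Pi.sub_apply, Finset.sum_apply]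
        have hleft : ∏ i ∈ T, dd (y i) (x i)
            = dd 0 (x i₀) * ∏ i ∈ T.erase i₀, dd (y i) (x i) := by
          rw [← Finset.mul_prod_erase T _ hi₀T, hi₀]
        have hright : ∀ v : ZMod s, ∏ i ∈ T, dd (Function.update y i₀ v i) (x i)
            = dd v (x i₀) * ∏ i ∈ T.erase i₀, dd (y i) (x i) := by
          intro v
          rw [← Finset.mul_prod_erase T _ hi₀T, Function.update_self]
          congr 1
          refine prod_congr rfl (fun i hi => ?_)
          rw [Function.update_of_ne (Finset.ne_of_mem_erase hi)]
        have hsum : ∑ v ∈ (univ : Finset (ZMod s)).erase 0, dd v (x i₀)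
            = 1 - dd 0 (x i₀) := by
          have htot : ∑ v ∈ (univ : Finset (ZMod s)), dd v (x i₀) = 1 := by
            unfold dd
            rw [Finset.sum_ite_eq univ (x i₀) (fun _ => (1 : ℤ))]
            simp
          have h5 := Finset.sum_erase_add (univ : Finset (ZMod s))
            (fun v => dd v (x i₀)) (mem_univ 0)
          rw [htot] at h5
          linarith
        calc ∏ i ∈ T, dd (y i) (x i)
            = dd 0 (x i₀) * ∏ i ∈ T.erase i₀, dd (y i) (x i) := hleft
          _ = (∏ i ∈ T.erase i₀, dd (y i) (x i)) -
              (1 - dd 0 (x i₀)) * ∏ i ∈ T.erase i₀, dd (y i) (x i) := by ring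
          _ = _ := by
              rw [← hsum, Finset.sum_mul]
              congr 1
              exact sum_congr rfl (fun v _ => (hright v).symm)
      rw [key]
      have h3 : 1 ≤ T.card := Finset.card_pos.mpr ⟨i₀, hi₀T⟩
      have h4 : 1 ≤ (T.filter (fun i => y i = 0)).card :=
        Finset.card_pos.mpr ⟨i₀, by simp [hi₀T, hi₀]⟩
      have herase : (fun x => ∏ i ∈ T.erase i₀, dd (y i) (x i))
          ∈ Submodule.span ℤ (BaSet L z d) := by
        refine ih (n - 1) (by omega) _ y ?_
          (le_trans (card_le_card (erase_subset _ _)) hcard)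
        have h1 : (T.erase i₀).card = T.card - 1 := card_erase_of_mem hi₀T
        have h2 : ((T.erase i₀).filter (fun i => y i = 0)).card
            ≤ (T.filter (fun i => y i = 0)).card :=
          card_le_card (filter_subset_filter _ (erase_subset _ _))
        omega
      refine Submodule.sub_mem _ herase (Submodule.sum_mem _ (fun v hv => ?_))
      have hvne : v ≠ 0 := Finset.ne_of_mem_erase hv
      refine ih (n - 1) (by omega) T (Function.update y i₀ v) ?_ hcard
      · have hfil : T.filter (fun i => Function.update y i₀ v i = 0)
            = (T.filter (fun i => y i = 0)).erase i₀ := by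
          ext i
          by_cases hii : i = i₀
          · subst hii; simp [Function.update_self, hvne]
          · simp [Function.update_of_ne hii, hii]
        have h1 : ((T.filter (fun i => y i = 0)).erase i₀).card
            = (T.filter (fun i => y i = 0)).card - 1 :=
          card_erase_of_mem (by simp [hi₀T, hi₀])
        rw [hfil]
        omega
    · -- all values nonzero on T
      push_neg at hzero
      set a : Fin r → ZMod s := fun i => if i ∈ T then y i else 0 with ha
      have hsupp : supp a = T := by
        ext i
        by_cases hiT : i ∈ T
        · simp [supp, ha, hiT, hzero i hiT]
        · simp [supp, ha, hiT]
      have hEa : (fun x => ∏ i ∈ T, dd (y i) (x i)) = Ea a := by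
        funext x
        rw [Ea, hsupp]
        refine prod_congr rfl (fun i hi => by simp [ha, hi])
      have hnorm : hammingNorm a ≤ d := by
        rw [hammingNorm_eq_card_supp, hsupp]; exact hcard
      rw [hEa]
      exact Ea_mem_span L z hz d (mu L a) a le_rfl hnorm

end Stmt7
namespace Stmt7

variable {r s : ℕ} [NeZero s] {G : Type*} [AddCommGroup G]

/-- representability by the shifted basis with coefficients in `G` -/
def RepB (L : ℕ) (z : Fin r) (d : ℕ) (f : (Fin r → ZMod s) → G) : Prop :=
  ∃ g : {a : Fin r → ZMod s // hammingNorm a ≤ d} → G,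
    ∀ x, f x = ∑ a : {a : Fin r → ZMod s // hammingNorm a ≤ d}, (Ba L z a.val x) • g a

lemma RepB_zero (L : ℕ) (z : Fin r) (d : ℕ) : RepB L z d (0 : (Fin r → ZMod s) → G) :=
  ⟨0, fun x => by simp⟩

lemma RepB_add {L : ℕ} {z : Fin r} {d : ℕ} {f₁ f₂ : (Fin r → ZMod s) → G}
    (h₁ : RepB L z d f₁) (h₂ : RepB L z d f₂) : RepB L z d (f₁ + f₂) := by
  obtain ⟨g₁, hg₁⟩ := h₁
  obtain ⟨g₂, hg₂⟩ := h₂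
  refine ⟨g₁ + g₂, fun x => ?_⟩
  simp [hg₁ x, hg₂ x, smul_add, Finset.sum_add_distrib]

lemma RepB_smul_of_mem_span {L : ℕ} {z : Fin r} {d : ℕ}
    {c : (Fin r → ZMod s) → ℤ} (hc : c ∈ Submodule.span ℤ (BaSet L z d)) :
    ∀ γ : G, RepB L z d (fun x => c x • γ) := by
  classical
  induction hc using Submodule.span_induction with
  | mem f hf =>
    obtain ⟨b, hb, rfl⟩ := hf
    intro γ
    refine ⟨fun a => if a = ⟨b, hb⟩ then γ else 0, fun x => ?_⟩
    rw [Finset.sum_eq_single (⟨b, hb⟩ : {a : Fin r → ZMod s // hammingNorm a ≤ d})]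
    · simp
    · intro a _ ha; simp [ha]
    · intro h; exact absurd (mem_univ _) h
  | zero => intro γ; convert RepB_zero L z d (G := G) using 1; funext x; simp; exact inferInstance
  | add f₁ f₂ _ _ ih₁ ih₂ =>
    intro γ
    have := RepB_add (ih₁ γ) (ih₂ γ)
    convert this using 1
    funext x
    simp [add_smul]
  | smul m f _ ih =>
    intro γ
    have := ih (m • γ)
    convert this using 1
    funext x
    simp [smul_smul, mul_comm]

lemma RepB_sum {L : ℕ} {z : Fin r} {d : ℕ} {ι : Type*} (t : Finset ι)
    (F : ι → (Fin r → ZMod s) → G) (hF : ∀ j ∈ t, RepB L z d (F j)) :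
    RepB L z d (∑ j ∈ t, F j) := by
  classical
  induction t using Finset.induction_on with
  | empty => simpa using RepB_zero L z d (G := G)
  | insert _ _ hnot ih =>
    rw [Finset.sum_insert hnot]
    exact RepB_add (hF _ (mem_insert_self _ _))
      (ih (fun j hj => hF j (mem_insert_of_mem hj)))

lemma RepB_of_depends (L : ℕ) (z : Fin r) (hz : L ≤ (z : ℕ)) (d : ℕ)
    (T : Finset (Fin r)) (hT : T.card ≤ d) (f : (Fin r → ZMod s) → G)
    (hf : ∀ x y, (∀ i ∈ T, x i = y i) → f x = f y) : RepB L z d f := by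
  classical
  have key : f = ∑ y ∈ (univ : Finset (Fin r → ZMod s)).filter
      (fun y => ∀ i, i ∉ T → y i = 0),
      (fun x => (∏ i ∈ T, dd (y i) (x i)) • f y) := by
    funext x
    rw [Finset.sum_apply]
    set y₀ : Fin r → ZMod s := fun i => if i ∈ T then x i else 0 with hy₀
    have hy₀mem : y₀ ∈ (univ : Finset (Fin r → ZMod s)).filter
        (fun y => ∀ i, i ∉ T → y i = 0) := by
      simp only [mem_filter, mem_univ, true_and]
      intro i hi; simp [hy₀, hi]
    rw [Finset.sum_eq_single y₀]
    · have h1 : (∏ i ∈ T, dd (y₀ i) (x i)) = 1 :=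
        prod_eq_one (fun i hi => by simp [hy₀, hi, dd])
      have h2 : f y₀ = f x := hf y₀ x (fun i hi => by simp [hy₀, hi])
      simp [h1, h2]
    · intro y hy hne
      have : ∃ i ∈ T, y i ≠ x i := by
        by_contra hcon
        push_neg at hcon
        apply hne
        funext i
        by_cases hi : i ∈ T
        · rw [hcon i hi]; simp [hy₀, hi]
        · simp only [mem_filter, mem_univ, true_and] at hy
          rw [hy i hi]; simp [hy₀, hi]
      obtain ⟨i, hiT, hix⟩ := this
      rw [prod_eq_zero hiT (by rw [dd, if_neg (fun h : x i = y i => hix h.symm)]), zero_smul]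
    · intro h; exact absurd hy₀mem h
  rw [key]
  refine RepB_sum _ _ (fun y _ => ?_)
  exact RepB_smul_of_mem_span
    (deltaProd_mem_span L z hz d (2 * T.card + (T.filter (fun i => y i = 0)).card)
      T y le_rfl hT) (f y)

end Stmt7
namespace Stmt7

variable {r s : ℕ} [NeZero s]

/-- index type: patterns of weight at most `d` -/
abbrev AT (r s d : ℕ) [NeZero s] := {a : Fin r → ZMod s // hammingNorm a ≤ d}

/-- restriction to low-weight points, as a linear map -/
def resL (r s d : ℕ) [NeZero s] : ((Fin r → ZMod s) → ℤ) →ₗ[ℤ] (AT r s d → ℤ) where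
  toFun f := fun b => f b.val
  map_add' _ _ := rfl
  map_smul' _ _ := rfl

lemma pi_eq_sum_single (f : AT r s d → ℤ) :
    f = ∑ b : AT r s d, (f b) • Pi.single b (1 : ℤ) := by
  classical
  funext c
  rw [Finset.sum_apply]
  have : ∀ b : AT r s d, ((f b) • (Pi.single b (1 : ℤ) : AT r s d → ℤ)) c
      = if c = b then f b else 0 := by
    intro b
    rw [Pi.smul_apply, Pi.single_apply]
    by_cases h : c = b <;> simp [h]
  rw [Finset.sum_congr rfl (fun b _ => this b), Finset.sum_ite_eq univ c f]
  simp

lemma single_mem_span (L d : ℕ) (z : Fin r) (hz : L ≤ (z : ℕ)) :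
    ∀ (n : ℕ) (a : AT r s d), d - hammingNorm a.val ≤ n →
      (Pi.single a (1 : ℤ)) ∈ Submodule.span ℤ
        (Set.range (fun a' : AT r s d => fun b : AT r s d => Ba L z a'.val b.val)) := by
  classical
  intro n
  induction n using Nat.strong_induction_on with
  | _ n ih =>
    intro a hn
    set V := Submodule.span ℤ
      (Set.range (fun a' : AT r s d => fun b : AT r s d => Ba L z a'.val b.val)) with hV
    have hcolE : (fun b : AT r s d => Ea a.val b.val) ∈ V := by
      have h1 : Ea a.val ∈ Submodule.span ℤ (BaSet L z d) :=
        Ea_mem_span L z hz d (mu L a.val) a.val le_rfl a.2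
      have h2 : resL r s d (Ea a.val) ∈
          Submodule.map (resL r s d) (Submodule.span ℤ (BaSet L z d)) :=
        Submodule.mem_map_of_mem h1
      rw [Submodule.map_span] at h2
      refine Submodule.span_mono ?_ h2
      rintro f ⟨g, ⟨b, hb, rfl⟩, rfl⟩
      exact ⟨⟨b, hb⟩, rfl⟩
    have hdec : (fun b : AT r s d => Ea a.val b.val)
        = Pi.single a (1 : ℤ) + ∑ b ∈ (univ : Finset (AT r s d)).erase a,
            (Ea a.val b.val) • Pi.single b (1 : ℤ) := by
      rw [pi_eq_sum_single (fun b : AT r s d => Ea a.val b.val)]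
      rw [← Finset.sum_erase_add _ _ (mem_univ a), add_comm]
      congr 1
      rw [Ea_self]
      simp
    have hsum : (∑ b ∈ (univ : Finset (AT r s d)).erase a,
        (Ea a.val b.val) • Pi.single b (1 : ℤ)) ∈ V := by
      refine Submodule.sum_mem _ (fun b hb => ?_)
      by_cases hE : Ea a.val b.val = 0
      · rw [hE]; simp
      · have hext := Ea_ne_zero hE
        have h1 : hammingNorm a.val ≤ hammingNorm b.val := norm_le_of_extends hext
        have hne : a.val ≠ b.val := by
          intro hcon
          exact (Finset.ne_of_mem_erase hb) (Subtype.ext hcon.symm)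
        have h2 : hammingNorm a.val < hammingNorm b.val := by
          rcases lt_or_eq_of_le h1 with h | h
          · exact h
          · exact absurd (eq_of_extends_of_norm_le hext (le_of_eq h.symm)) hne
        refine Submodule.smul_mem _ _ (ih (d - hammingNorm b.val) ?_ b le_rfl)
        have := b.2
        have := a.2
        omega
    have : Pi.single a (1 : ℤ)
        = (fun b : AT r s d => Ea a.val b.val) - ∑ b ∈ (univ : Finset (AT r s d)).erase a,
            (Ea a.val b.val) • Pi.single b (1 : ℤ) := by
      rw [hdec]; abel
    rw [this]
    exact Submodule.sub_mem _ hcolE hsum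

lemma exists_dual (L d : ℕ) (z : Fin r) (hz : L ≤ (z : ℕ)) :
    ∃ W : AT r s d → AT r s d → ℤ, ∀ a a' : AT r s d,
      ∑ b : AT r s d, W a b * Ba L z a'.val b.val = if a = a' then 1 else 0 := by
  classical
  have hchoice : ∀ a : AT r s d, ∃ c : AT r s d → ℤ,
      ∑ a' : AT r s d, c a' • (fun b : AT r s d => Ba L z a'.val b.val)
        = Pi.single a (1 : ℤ) := by
    intro a
    rw [← Submodule.mem_span_range_iff_exists_fun (R := ℤ)]
    exact single_mem_span L d z hz (d - hammingNorm a.val) a le_rfl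
  choose c hc using hchoice
  set M : Matrix (AT r s d) (AT r s d) ℤ :=
    Matrix.of (fun b a' : AT r s d => Ba L z a'.val b.val) with hM
  set U : Matrix (AT r s d) (AT r s d) ℤ :=
    Matrix.of (fun b a : AT r s d => c a b) with hU
  have hMU : M * U = 1 := by
    ext β a
    rw [Matrix.mul_apply]
    have := congrFun (hc a) β
    rw [Finset.sum_apply] at this
    simp only [Pi.smul_apply, smul_eq_mul] at this
    rw [Matrix.one_apply, Pi.single_apply] at *
    rw [← this]
    exact Finset.sum_congr rfl (fun b _ => by simp [hM, hU, mul_comm])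
  have hUM : U * M = 1 := mul_eq_one_comm.mp hMU
  refine ⟨fun a b => U a b, fun a a' => ?_⟩
  have := congrFun (congrFun hUM a) a'
  rw [Matrix.mul_apply, Matrix.one_apply] at this
  exact this

end Stmt7
namespace Stmt7

variable {r s : ℕ} [NeZero s] {G : Type*} [AddCommGroup G]

lemma rep_unique (L d : ℕ) (z : Fin r) (hz : L ≤ (z : ℕ)) {g g' : AT r s d → G}
    (h : ∀ x, ∑ a : AT r s d, (Ba L z a.val x) • g a
      = ∑ a : AT r s d, (Ba L z a.val x) • g' a) : g = g' := by
  classical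
  obtain ⟨W, hW⟩ := exists_dual (s := s) L d z hz
  have key : ∀ x, ∑ a : AT r s d, (Ba L z a.val x) • (g a - g' a) = 0 := by
    intro x
    simp only [smul_sub, Finset.sum_sub_distrib, h x, sub_self]
  funext a
  have hzero : g a - g' a = 0 := by
    calc g a - g' a
        = ∑ a' : AT r s d, (if a = a' then (1 : ℤ) else 0) • (g a' - g' a') := by
          rw [Finset.sum_eq_single a]
          · simp
          · intro b _ hb
            rw [if_neg (fun hc : a = b => hb hc.symm), zero_smul]
          · intro hmem; exact absurd (mem_univ a) hmem
      _ = ∑ a' : AT r s d,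
            (∑ b : AT r s d, W a b * Ba L z a'.val b.val) • (g a' - g' a') := by
          exact Finset.sum_congr rfl (fun a' _ => by rw [hW a a'])
      _ = ∑ a' : AT r s d, ∑ b : AT r s d,
            W a b • (Ba L z a'.val b.val • (g a' - g' a')) := by
          refine Finset.sum_congr rfl (fun a' _ => ?_)
          rw [Finset.sum_smul]
          exact Finset.sum_congr rfl (fun b _ => by rw [mul_smul])
      _ = ∑ b : AT r s d,
            W a b • (∑ a' : AT r s d, Ba L z a'.val b.val • (g a' - g' a')) := by
          rw [Finset.sum_comm]
          exact Finset.sum_congr rfl (fun b _ => by rw [Finset.smul_sum])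
      _ = 0 := by
          refine Finset.sum_eq_zero (fun b _ => ?_)
          rw [key b.val, smul_zero]
  exact sub_eq_zero.mp hzero

end Stmt7
namespace Stmt7

variable {r s : ℕ} [NeZero s] {G : Type*} [AddCommGroup G]

lemma RepB_of_junta (L d : ℕ) (z : Fin r) (hz : L ≤ (z : ℕ))
    (Q : (Fin r → ZMod s) → G) (hQ : JuntaDegLE d Q) : RepB L z d Q := by
  obtain ⟨t, Ds, fs, hcard, hdep, hsum⟩ := hQ
  have : Q = ∑ j ∈ (univ : Finset (Fin t)), fs j := by
    funext x
    rw [hsum x, Finset.sum_apply]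
  rw [this]
  exact RepB_sum _ _ (fun j _ =>
    RepB_of_depends L z hz d (Ds j) (hcard j) (fs j) (hdep j))

end Stmt7

open Stmt7 in
theorem stmt7 {s r L d : ℕ} [NeZero s] (hr : 2 ≤ r) (hL1 : 1 ≤ L) (hLr : L ≤ r - 1)
    {G : Type*} [AddCommGroup G]
    (Q : (Fin r → ZMod s) → G) (hQ : JuntaDegLE d Q) :
    ∃! g : {a : Fin r → ZMod s // hammingNorm a ≤ d} → G,
      ∀ x : Fin r → ZMod s,
        Q x = ∑ a : {a : Fin r → ZMod s // hammingNorm a ≤ d},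
          ((∏ i ∈ Finset.univ.filter
                (fun i : Fin r => (i : ℕ) < L ∧ (a : Fin r → ZMod s) i ≠ 0),
              ((if x i = (a : Fin r → ZMod s) i then (1 : ℤ) else 0)
                - (if x ⟨r - 1, by omega⟩ = (a : Fin r → ZMod s) i then (1 : ℤ) else 0)))
            * ∏ i ∈ Finset.univ.filter
                (fun i : Fin r => L ≤ (i : ℕ) ∧ (a : Fin r → ZMod s) i ≠ 0),
              (if x i = (a : Fin r → ZMod s) i then (1 : ℤ) else 0)) • g a := by
  set z : Fin r := ⟨r - 1, by omega⟩ with hzdef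
  have hz : L ≤ (z : ℕ) := by simp [hzdef]; omega
  have hBa : ∀ (a : AT r s d) (x : Fin r → ZMod s),
      Ba L z a.val x =
        ((∏ i ∈ Finset.univ.filter
              (fun i : Fin r => (i : ℕ) < L ∧ (a : Fin r → ZMod s) i ≠ 0),
            ((if x i = (a : Fin r → ZMod s) i then (1 : ℤ) else 0)
              - (if x ⟨r - 1, by omega⟩ = (a : Fin r → ZMod s) i then (1 : ℤ) else 0)))
          * ∏ i ∈ Finset.univ.filter
              (fun i : Fin r => L ≤ (i : ℕ) ∧ (a : Fin r → ZMod s) i ≠ 0),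
            (if x i = (a : Fin r → ZMod s) i then (1 : ℤ) else 0)) := by
    intro a x
    rfl
  obtain ⟨g, hg⟩ := RepB_of_junta L d z hz Q hQ
  refine ⟨g, fun x => ?_, fun g' hg' => ?_⟩
  · rw [hg x]
    exact Finset.sum_congr rfl (fun a _ => by rw [hBa a x])
  · refine rep_unique L d z hz (fun x => ?_)
    calc ∑ a : AT r s d, (Ba L z a.val x) • g' a
        = Q x := by
          rw [hg' x]
          exact Finset.sum_congr rfl (fun a _ => by rw [hBa a x])
      _ = ∑ a : AT r s d, (Ba L z a.val x) • g a := by rw [hg x]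
end

section
/- Let G be an additive abelian group, s ≥ 1, r ≥ 2, 1 ≤ L ≤ r−1, and d ∈ ℕ. For h ∈ {1,…,L} and Q : (ZMod s)^r → G, let Q|_h denote the function x ↦ Q(x'), where x' agrees with x except that its h-th coordinate is replaced by x_r. Suppose P^(1),…,P^(L) : (ZMod s)^r → G each have junta-degree at most d, each P^(h) does not depend on its h-th coordinate (i.e., P^(h)(x) = P^(h)(x') whenever x and x' agree on all coordinates except possibly the h-th), and P^(h)|_{h'} = P^(h')|_{h} for all h ≠ h' in {1,…,L}. Then there exists a function P : (ZMod s)^r → G of junta-degree at most d such that for every h ∈ {1,…,L} and every x ∈ (ZMod s)^r with x_h = x_r, P(x) = P^(h)(x). -/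
lemma junta_zero {n : ℕ} {D : Fin n → Type*} {G : Type*} [AddCommGroup G] (d : ℕ) :
    JuntaDegLE (D := D) (G := G) d (fun _ => 0) := by
  refine ⟨0, fun j => j.elim0, fun j => j.elim0, fun j => j.elim0, fun j => j.elim0, ?_⟩
  intro x
  simp

lemma junta_add {n d : ℕ} {D : Fin n → Type*} {G : Type*} [AddCommGroup G]
    {f g : (∀ i, D i) → G} (hf : JuntaDegLE d f) (hg : JuntaDegLE d g) :
    JuntaDegLE d (fun x => f x + g x) := by
  obtain ⟨t1, Ds1, fs1, hc1, hd1, hs1⟩ := hf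
  obtain ⟨t2, Ds2, fs2, hc2, hd2, hs2⟩ := hg
  refine ⟨t1 + t2, Fin.addCases Ds1 Ds2, Fin.addCases fs1 fs2, ?_, ?_, ?_⟩
  · intro j
    induction j using Fin.addCases with
    | left j => simpa using hc1 j
    | right j => simpa using hc2 j
  · intro j x y hxy
    induction j using Fin.addCases with
    | left j => simp only [Fin.addCases_left] at hxy ⊢; exact hd1 j x y hxy
    | right j => simp only [Fin.addCases_right] at hxy ⊢; exact hd2 j x y hxy
  · intro x
    rw [Fin.sum_univ_add]
    simp only [Fin.addCases_left, Fin.addCases_right]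
    rw [← hs1 x, ← hs2 x]

lemma junta_neg {n d : ℕ} {D : Fin n → Type*} {G : Type*} [AddCommGroup G]
    {f : (∀ i, D i) → G} (hf : JuntaDegLE d f) :
    JuntaDegLE d (fun x => - f x) := by
  obtain ⟨t, Ds, fs, hc, hd, hs⟩ := hf
  refine ⟨t, Ds, fun j x => - fs j x, hc, ?_, ?_⟩
  · intro j x y hxy
    simp only
    rw [hd j x y hxy]
  · intro x
    simp only
    rw [hs x, ← Finset.sum_neg_distrib]

lemma junta_sub {n d : ℕ} {D : Fin n → Type*} {G : Type*} [AddCommGroup G]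
    {f g : (∀ i, D i) → G} (hf : JuntaDegLE d f) (hg : JuntaDegLE d g) :
    JuntaDegLE d (fun x => f x - g x) := by
  have := junta_add hf (junta_neg hg)
  simpa [sub_eq_add_neg] using this

lemma junta_subst {n d : ℕ} {A : Type*} {G : Type*} [AddCommGroup G]
    (a b : Fin n) (f : (Fin n → A) → G) (hf : JuntaDegLE d f) :
    JuntaDegLE d (fun x => f (Function.update x a (x b))) := by
  obtain ⟨t, Ds, fs, hc, hd, hs⟩ := hf
  refine ⟨t, fun j => if a ∈ Ds j then insert b ((Ds j).erase a) else Ds j,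
    fun j x => fs j (Function.update x a (x b)), ?_, ?_, ?_⟩
  · intro j
    by_cases hmem : a ∈ Ds j
    · simp only [hmem, if_pos]
      calc (insert b ((Ds j).erase a)).card ≤ ((Ds j).erase a).card + 1 :=
            Finset.card_insert_le _ _
        _ = (Ds j).card := by
            rw [Finset.card_erase_of_mem hmem]
            exact Nat.succ_pred_eq_of_pos (Finset.card_pos.mpr ⟨a, hmem⟩)
        _ ≤ d := hc j
    · simpa [hmem] using hc j
  · intro j x y hxy
    apply hd j
    intro i hi
    by_cases hia : i = a
    · subst hia
      simp only [Function.update_self]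
      by_cases hmem : i ∈ Ds j
      · exact hxy b (by simp [hmem])
      · exact absurd hi hmem
    · rw [Function.update_of_ne hia, Function.update_of_ne hia]
      by_cases hmem : a ∈ Ds j
      · exact hxy i (by simp [hmem, Finset.mem_insert, Finset.mem_erase, hia, hi])
      · exact hxy i (by simp [hmem, hi])
  · intro x
    exact hs _

lemma key {s : ℕ} [NeZero s] {G : Type*} [AddCommGroup G] {r d : ℕ} (hr : 1 ≤ r) :
    ∀ (L : ℕ) (hLr : L ≤ r) (P : Fin L → (Fin r → ZMod s) → G),
      (∀ h, JuntaDegLE d (P h)) →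
      (∀ (h : Fin L) (x x' : Fin r → ZMod s),
        (∀ i : Fin r, i ≠ Fin.castLE hLr h → x i = x' i) → P h x = P h x') →
      (∀ (h h' : Fin L), h ≠ h' → ∀ x : Fin r → ZMod s,
        P h (Function.update x (Fin.castLE hLr h') (x ⟨r - 1, by omega⟩))
          = P h' (Function.update x (Fin.castLE hLr h) (x ⟨r - 1, by omega⟩))) →
      ∃ Pf : (Fin r → ZMod s) → G, JuntaDegLE d Pf ∧
        ∀ (h : Fin L) (x : Fin r → ZMod s),
          x (Fin.castLE hLr h) = x ⟨r - 1, by omega⟩ → Pf x = P h x := by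
  intro L
  induction L with
  | zero =>
    intro _ P _ _ _
    exact ⟨fun _ => 0, junta_zero d, fun h => h.elim0⟩
  | succ L ih =>
    intro hLr P hdeg hindep hagree
    have hLr' : L ≤ r := by omega
    obtain ⟨P', hP'deg, hP'⟩ := ih hLr' (fun h => P h.castSucc)
      (fun h => hdeg _)
      (fun h x x' hxx => hindep h.castSucc x x' hxx)
      (fun h h' hne x => hagree h.castSucc h'.castSucc (by simpa using hne) x)
    have hrlt : r - 1 < r := by omega
    let cL : Fin r := Fin.castLE hLr (Fin.last L)
    let rr : Fin r := ⟨r - 1, hrlt⟩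
    let u : (Fin r → ZMod s) → (Fin r → ZMod s) :=
      fun x => Function.update x cL (x rr)
    have hurr : ∀ x, u x rr = x rr := by
      intro x
      show Function.update x cL (x rr) rr = x rr
      simp only [Function.update_apply, ite_self]
    refine ⟨fun x => P' x + (P (Fin.last L) (u x) - P' (u x)), ?_, ?_⟩
    · exact junta_add hP'deg
        (junta_sub (junta_subst cL rr _ (hdeg _)) (junta_subst cL rr _ hP'deg))
    · intro h x hx
      induction h using Fin.lastCases with
      | last =>
        have hx2 : x cL = x rr := hx
        have hux : u x = x := by
          show Function.update x cL (x rr) = x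
          rw [← hx2, Function.update_eq_self]
        show P' x + (P (Fin.last L) (u x) - P' (u x)) = P (Fin.last L) x
        rw [hux]; abel
      | cast h =>
        have hne : Fin.castLE hLr' h ≠ cL := by
          simp only [cL, Fin.ne_iff_vne, Fin.coe_castLE, Fin.val_last]
          exact h.isLt.ne
        have hx' : x (Fin.castLE hLr' h) = x rr := hx
        -- e1 : updating at coordinate h does nothing since x_h = x_rr
        have e1 : Function.update x (Fin.castLE hLr' h) (x rr) = x := by
          rw [← hx', Function.update_eq_self]
        -- e2 : P h (u x) = P last x (compatibility)
        have e2 : P h.castSucc (u x) = P (Fin.last L) x := by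
          have := hagree h.castSucc (Fin.last L)
            (by simp [Fin.ne_iff_vne]) x
          rw [show Function.update x (Fin.castLE hLr h.castSucc) (x rr) = x from e1] at this
          exact this
        -- e3 : P last is independent of coordinate cL
        have e3 : P (Fin.last L) x = P (Fin.last L) (u x) :=
          hindep (Fin.last L) x (u x)
            (fun i hi => (Function.update_of_ne hi _ _).symm)
        -- h2 : P' (u x) = P h (u x)
        have h2 : P' (u x) = P h.castSucc (u x) := by
          apply hP' h (u x)
          rw [hurr x]
          show Function.update x cL (x rr) (Fin.castLE hLr' h) = x rr
          rw [Function.update_of_ne hne]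
          exact hx'
        have h1 : P' x = P h.castSucc x := hP' h x hx'
        show P' x + (P (Fin.last L) (u x) - P' (u x)) = P h.castSucc x
        rw [← e3, ← e2, ← h2, h1]
        abel

theorem stmt8 {s r L d : ℕ} [NeZero s] (hr : 2 ≤ r) (hL1 : 1 ≤ L) (hLr : L ≤ r - 1)
    {G : Type*} [AddCommGroup G]
    (P : Fin L → (Fin r → ZMod s) → G)
    (hdeg : ∀ h, JuntaDegLE d (P h))
    (hindep : ∀ (h : Fin L) (x x' : Fin r → ZMod s),
      (∀ i : Fin r, i ≠ Fin.castLE (by omega) h → x i = x' i) → P h x = P h x')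
    (hagree : ∀ (h h' : Fin L), h ≠ h' → ∀ x : Fin r → ZMod s,
      P h (Function.update x (Fin.castLE (by omega) h') (x ⟨r - 1, by omega⟩))
        = P h' (Function.update x (Fin.castLE (by omega) h) (x ⟨r - 1, by omega⟩))) :
    ∃ Pf : (Fin r → ZMod s) → G, JuntaDegLE d Pf ∧
      ∀ (h : Fin L) (x : Fin r → ZMod s),
        x (Fin.castLE (by omega) h) = x ⟨r - 1, by omega⟩ → Pf x = P h x := by
  exact key (by omega) L (by omega) P hdeg hindep hagree
end

section
/- Let F be a field, S ⊆ F a finite set, K ≥ 1, T ⊆ S^K a nonempty finite set, and d ∈ ℕ. Then the F-vector space of all functions T → F has a basis m₁,…,m_ℓ with the following property: for every function f = c₁m₁ + ⋯ + c_ℓm_ℓ with c_i ∈ F, f is degree-d if and only if for each i, either c_i = 0 or m_i is degree-d. -/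
/-- A function `f : T → F`, for `T ⊆ F^K`, is degree-`d` if some polynomial of total
degree at most `d` agrees with it on `T`. -/
def DegLEOn {F : Type*} [Field F] {K : ℕ} (d : ℕ) (T : Finset (Fin K → F))
    (f : ↥T → F) : Prop :=
  ∃ P : MvPolynomial (Fin K) F, P.totalDegree ≤ d ∧
    ∀ x : ↥T, MvPolynomial.eval (x : Fin K → F) P = f x

lemma aux_basis {F E : Type*} [Field F] [AddCommGroup E] [Module F E]
    [FiniteDimensional F E] (V : Submodule F E) :
    ∃ (ℓ : ℕ) (m : Module.Basis (Fin ℓ) F E),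
      ∀ c : Fin ℓ → F, (∑ i, c i • m i) ∈ V ↔ ∀ i, c i = 0 ∨ m i ∈ V := by
  obtain ⟨W, hW⟩ := Submodule.exists_isCompl V
  let a := Module.finrank F V
  let b := Module.finrank F W
  let bV := Module.finBasis F V
  let bW := Module.finBasis F W
  let e : Fin a ⊕ Fin b ≃ Fin (a + b) := finSumFinEquiv
  let B : Module.Basis (Fin a ⊕ Fin b) F E :=
    (bV.prod bW).map (Submodule.prodEquivOfIsCompl V W hW)
  have hBl : ∀ i, B (Sum.inl i) = (bV i : E) := by
    intro i
    simp [B, Module.Basis.prod_apply, Submodule.coe_prodEquivOfIsCompl']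
  have hBr : ∀ j, B (Sum.inr j) = (bW j : E) := by
    intro j
    simp [B, Module.Basis.prod_apply, Submodule.coe_prodEquivOfIsCompl']
  refine ⟨a + b, B.reindex e, fun c => ?_⟩
  have hmem : ∀ i : Fin (a + b), (B.reindex e) i ∈ V ∨ (B.reindex e) i ∈ W := by
    intro i
    rw [Module.Basis.reindex_apply]
    rcases h : e.symm i with j | j
    · left; rw [hBl]; exact (bV j).2
    · right; rw [hBr]; exact (bW j).2
  constructor
  · intro hsum i
    by_cases hc : c i = 0
    · exact Or.inl hc
    rcases hmem i with hV | hWm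
    · exact Or.inr hV
    -- show c i = 0: apply projection onto W along V
    exfalso
    apply hc
    let π := W.projectionOnto V hW.symm
    have h0 : π (∑ j, c j • (B.reindex e) j) = 0 :=
      Submodule.projectionOnto_apply_of_mem_right hW.symm hsum
    rw [map_sum] at h0
    -- rewrite sum over Fin (a+b) as sum over sum type
    have hsum2 : ∑ j, π (c j • (B.reindex e) j)
        = ∑ s : Fin a ⊕ Fin b, π (c (e s) • (B.reindex e) (e s)) :=
      (Fintype.sum_equiv e _ _ (fun s => rfl)).symm
    rw [hsum2, Fintype.sum_sum_type] at h0
    have hπl : ∀ j : Fin a, π (c (e (Sum.inl j)) • (B.reindex e) (e (Sum.inl j))) = 0 := by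
      intro j
      rw [map_smul]
      have : (B.reindex e) (e (Sum.inl j)) ∈ V := by
        rw [Module.Basis.reindex_apply, Equiv.symm_apply_apply, hBl]; exact (bV j).2
      rw [Submodule.projectionOnto_apply_of_mem_right hW.symm this, smul_zero]
    have hπr : ∀ j : Fin b, π (c (e (Sum.inr j)) • (B.reindex e) (e (Sum.inr j)))
        = c (e (Sum.inr j)) • bW j := by
      intro j
      rw [map_smul]
      congr 1
      have : (B.reindex e) (e (Sum.inr j)) = ((bW j : E)) := by
        rw [Module.Basis.reindex_apply, Equiv.symm_apply_apply, hBr]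
      rw [this]
      exact Submodule.projectionOnto_apply_left hW.symm (bW j)
    simp only [hπl, Finset.sum_const_zero, zero_add, hπr] at h0
    -- linear independence of bW
    have hlin := bW.linearIndependent
    rw [Fintype.linearIndependent_iff] at hlin
    have hci := hlin (fun j => c (e (Sum.inr j))) h0
    -- i is of the form e (inr j) since B i ∈ W and not in V... need i = e (Sum.inr j)
    rcases h : e.symm i with j | j
    ·
      -- if e.symm i = inl j then (B.reindex e) i = bV j ∈ V
      -- but we are in case hWm and not hV... hV was just ¬(m i ∈ V)? No, rcases gave hWm.
      have h1 : (B.reindex e) i ∈ V := by rw [Module.Basis.reindex_apply, h, hBl]; exact (bV j).2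
      have h2 := hW.disjoint.eq_bot ▸ Submodule.mem_inf.mpr ⟨h1, hWm⟩
      have : (B.reindex e) i = 0 := by
        have := Submodule.disjoint_def.mp hW.disjoint _ h1 hWm
        exact this
      exact absurd this ((B.reindex e).ne_zero i)
    · have hij : e (Sum.inr j) = i := by rw [← h]; exact e.apply_symm_apply i
      simpa [hij] using hci j
  · intro h
    refine Submodule.sum_mem V fun i _ => ?_
    rcases h i with h0 | hV
    · rw [h0, zero_smul]; exact V.zero_mem
    · exact V.smul_mem _ hV

theorem stmt9 {F : Type*} [Field F] (S : Finset F) {K : ℕ} (hK : 1 ≤ K)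
    (T : Finset (Fin K → F)) (hT : T.Nonempty) (hTS : ∀ x ∈ T, ∀ i, x i ∈ S)
    (d : ℕ) :
    ∃ (ℓ : ℕ) (m : Module.Basis (Fin ℓ) F (↥T → F)),
      ∀ c : Fin ℓ → F,
        DegLEOn d T (∑ i, c i • m i) ↔ ∀ i, c i = 0 ∨ DegLEOn d T (m i) := by
  let V : Submodule F (↥T → F) :=
    { carrier := {f | DegLEOn d T f}
      add_mem' := by
        rintro f g ⟨P, hP, hPf⟩ ⟨Q, hQ, hQg⟩
        exact ⟨P + Q, le_trans (MvPolynomial.totalDegree_add P Q) (max_le hP hQ),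
          fun x => by simp [hPf x, hQg x]⟩
      zero_mem' := ⟨0, by simp, by simp⟩
      smul_mem' := by
        rintro r f ⟨P, hP, hPf⟩
        exact ⟨r • P, le_trans (MvPolynomial.totalDegree_smul_le r P) hP,
          fun x => by simp [hPf x]⟩ }
  have hVmem : ∀ f : ↥T → F, f ∈ V ↔ DegLEOn d T f := fun f => Iff.rfl
  obtain ⟨ℓ, m, hm⟩ := aux_basis V
  exact ⟨ℓ, m, fun c => by rw [← hVmem]; exact (hm c).trans (by simp [hVmem])⟩
end

section
/- Let F be a field, S ⊆ F a finite set with |S| = s ≥ 2, t = s³, and 0 ≤ d' ≤ s−1. Consider the function f : B(S,t) → F given by f(z) = z₁^{d'} (the d'-th power of the first coordinate). Then f is degree-d', and if d' ≥ 1 then f is not degree-(d'−1): no polynomial in F[z₁,…,z_t] of total degree at most d'−1 agrees with f on B(S,t). -/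
/-- `z ∈ S^t` is a balanced tuple if it contains each element of `S` exactly
`t / |S|` times. -/
def IsBalancedTuple {F : Type*} [DecidableEq F] (S : Finset F) (t : ℕ)
    (z : Fin t → F) : Prop :=
  (∀ i, z i ∈ S) ∧
  ∀ a ∈ S, (Finset.univ.filter (fun i => z i = a)).card = t / S.card

set_option linter.unusedSectionVars false
set_option linter.unusedVariables false

namespace Stmt10Aux
variable {F : Type*} [Field F]

/-- value of complete homogeneous symmetric polynomial of degree `d` in variables `z 0 .. z (m-1)` -/
def Hc (F : Type*) [Field F] : ℕ → ℕ → (ℕ → F) → F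
  | 0, _, _ => 1
  | _+1, 0, _ => 0
  | d+1, m+1, z => Hc F (d+1) m z + z m * Hc F d (m+1) z
  termination_by d m => (d, m)

@[simp] lemma Hc_zero (m : ℕ) (z : ℕ → F) : Hc F 0 m z = 1 := by
  unfold Hc; rfl

@[simp] lemma Hc_succ_zero (d : ℕ) (z : ℕ → F) : Hc F (d+1) 0 z = 0 := by
  unfold Hc; rfl

lemma Hc_succ_succ (d m : ℕ) (z : ℕ → F) :
    Hc F (d+1) (m+1) z = Hc F (d+1) m z + z m * Hc F d (m+1) z := by
  rw [Hc]

lemma Hc_congr : ∀ (d m : ℕ) (z w : ℕ → F), (∀ i, i < m → z i = w i) →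
    Hc F d m z = Hc F d m w := by
  intro d
  induction d with
  | zero => intro m z w h; simp
  | succ n ih =>
    intro m
    induction m with
    | zero => intro z w h; simp
    | succ m ihm =>
      intro z w h
      rw [Hc_succ_succ, Hc_succ_succ, ihm z w (fun i hi => h i (by omega)),
        h m (by omega), ih (m+1) z w h]

lemma Hc_one_var (d : ℕ) (z : ℕ → F) : Hc F d 1 z = z 0 ^ d := by
  induction d with
  | zero => simp
  | succ n ih => rw [Hc_succ_succ, Hc_succ_zero, ih, pow_succ]; ring

/-- peel the second-to-last variable -/
lemma Hc_peel (d m : ℕ) (z : ℕ → F) :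
    Hc F (d+1) (m+2) z
      = Hc F (d+1) (m+1) (Function.update z m (z (m+1))) + z m * Hc F d (m+2) z := by
  induction d with
  | zero =>
    rw [Hc_succ_succ 0 (m+1), Hc_succ_succ 0 m,
      Hc_succ_succ 0 m (Function.update z m (z (m+1))),
      Hc_congr (F := F) (0+1) m (Function.update z m (z (m+1))) z
        (fun i hi => Function.update_of_ne (by omega) _ _),
      Function.update_self]
    simp only [Hc_zero]
    ring
  | succ n ih =>
    have e1 : Hc F (n+1) (m+2) z = Hc F (n+1) (m+1) z + z (m+1) * Hc F n (m+2) z :=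
      Hc_succ_succ n (m+1) z
    rw [Hc_succ_succ (n+1) (m+1) z, Hc_succ_succ (n+1) m z, ih,
      Hc_succ_succ (n+1) m (Function.update z m (z (m+1))),
      Hc_congr (F := F) (n+1+1) m (Function.update z m (z (m+1))) z
        (fun i hi => Function.update_of_ne (by omega) _ _),
      Function.update_self]
    linear_combination (z m) * (ih - e1)

/-- difference identity: H_{d+1}(p,A) - H_{d+1}(p,B) = (A-B) * H_d(p,A,B) -/
lemma Hc_sub (d m : ℕ) (z : ℕ → F) (A B : F) :
    Hc F (d+1) (m+1) (Function.update z m A) - Hc F (d+1) (m+1) (Function.update z m B)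
      = (A - B) * Hc F d (m+2) (Function.update (Function.update z m A) (m+1) B) := by
  induction d with
  | zero =>
    rw [Hc_succ_succ 0 m, Hc_succ_succ 0 m,
      Hc_congr (F := F) (0+1) m (Function.update z m A) (Function.update z m B)
        (fun i hi => by rw [Function.update_of_ne (by omega), Function.update_of_ne (by omega)]),
      Function.update_self, Function.update_self]
    simp only [Hc_zero]
    ring
  | succ n ih =>
    have peel : Hc F (n+1) (m+2) (Function.update (Function.update z m A) (m+1) B)
        = Hc F (n+1) (m+1) (Function.update z m B)
          + A * Hc F n (m+2) (Function.update (Function.update z m A) (m+1) B) := by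
      have := Hc_peel (F := F) n m (Function.update (Function.update z m A) (m+1) B)
      rw [this]
      have h2 : Function.update (Function.update z m A) (m+1) B m = A := by
        rw [Function.update_of_ne (by omega), Function.update_self]
      have h1 : Hc F (n+1) (m+1)
          (Function.update (Function.update (Function.update z m A) (m+1) B) m
            (Function.update (Function.update z m A) (m+1) B (m+1)))
          = Hc F (n+1) (m+1) (Function.update z m B) := by
        apply Hc_congr
        intro i hi
        rcases Nat.lt_or_ge i m with h | h
        · rw [Function.update_of_ne (by omega), Function.update_of_ne (by omega),
            Function.update_of_ne (by omega), Function.update_of_ne (by omega)]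
        · have him : i = m := by omega
          subst him
          rw [Function.update_self, Function.update_self, Function.update_self]
      rw [h1, h2]
    rw [Hc_succ_succ (n+1) m, Hc_succ_succ (n+1) m,
      Hc_congr (F := F) (n+1+1) m (Function.update z m A) (Function.update z m B)
        (fun i hi => by rw [Function.update_of_ne (by omega), Function.update_of_ne (by omega)]),
      Function.update_self, Function.update_self, peel]
    linear_combination A * ih

open MvPolynomial

variable {σ : Type*} [DecidableEq σ]

/-- telescoping geometric identity -/
lemma telescope (i j : σ) : ∀ (a k : ℕ),
    (X i - X j) * (∑ r ∈ Finset.range a, X i ^ r * X j ^ ((a - 1 - r) + k))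
      = X i ^ a * X j ^ k - (X j ^ (a + k) : MvPolynomial σ F) := by
  intro a
  induction a with
  | zero => intro k; simp
  | succ n ih =>
    intro k
    rw [Finset.sum_range_succ]
    have hcong : ∑ r ∈ Finset.range n, (X i ^ r * X j ^ ((n + 1 - 1 - r) + k) : MvPolynomial σ F)
        = ∑ r ∈ Finset.range n, X i ^ r * X j ^ ((n - 1 - r) + (k + 1)) := by
      apply Finset.sum_congr rfl
      intro r hr
      simp only [Finset.mem_range] at hr
      have he : (n + 1 - 1 - r) + k = (n - 1 - r) + (k + 1) := by omega
      rw [he]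
    rw [hcong, mul_add, ih (k+1)]
    have h1 : (n + 1 - 1 - n) + k = k := by omega
    rw [h1]
    ring_nf

set_option linter.unusedSectionVars false

/-- quotient of `X^u - X^(swap i j • u)` by `X i - X j` -/
noncomputable def Gq (i j : σ) (u : σ →₀ ℕ) : MvPolynomial σ F :=
  monomial ((u.erase i).erase j) 1 *
    ((∑ r ∈ Finset.range (u i), X i ^ r * X j ^ ((u i - 1 - r) + u j))
      - ∑ r ∈ Finset.range (u j), X i ^ r * X j ^ ((u j - 1 - r) + u i))

lemma monomial_decomp (i j : σ) (hij : i ≠ j) (u : σ →₀ ℕ) (a b : ℕ) :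
    (monomial ((u.erase i).erase j + Finsupp.single i a + Finsupp.single j b) (1 : F))
      = monomial ((u.erase i).erase j) 1 * X i ^ a * X j ^ b := by
  rw [X_pow_eq_monomial, X_pow_eq_monomial, monomial_mul, monomial_mul]
  simp

lemma u_decomp (i j : σ) (hij : i ≠ j) (u : σ →₀ ℕ) :
    (u.erase i).erase j + Finsupp.single i (u i) + Finsupp.single j (u j) = u := by
  ext k
  simp only [Finsupp.add_apply, Finsupp.erase_apply, Finsupp.single_apply]
  by_cases hki : k = i
  · subst hki; simp [hij, Ne.symm hij]
  · by_cases hkj : k = j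
    · subst hkj; simp [hij, Ne.symm hij]
    · simp [Ne.symm hki, Ne.symm hkj, hki, hkj]

lemma mapDomain_swap (i j : σ) (hij : i ≠ j) (u : σ →₀ ℕ) :
    Finsupp.mapDomain (Equiv.swap i j) u
      = (u.erase i).erase j + Finsupp.single i (u j) + Finsupp.single j (u i) := by
  ext k
  rw [show ((Equiv.swap i j : σ ≃ σ) : σ → σ) = ⇑(Equiv.swap i j) from rfl]
  rw [Finsupp.mapDomain_equiv_apply]
  simp only [Finsupp.add_apply, Finsupp.erase_apply, Finsupp.single_apply,
    Equiv.symm_swap]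
  by_cases hki : k = i
  · subst hki; simp [hij, Ne.symm hij, Equiv.swap_apply_left]
  · by_cases hkj : k = j
    · subst hkj; simp [hij, Ne.symm hij, Equiv.swap_apply_right]
    · rw [Equiv.swap_apply_of_ne_of_ne hki hkj]
      simp [hki, hkj, Ne.symm hki, Ne.symm hkj]

lemma Gq_mul (i j : σ) (hij : i ≠ j) (u : σ →₀ ℕ) :
    (X i - X j) * Gq i j u
      = (monomial u 1 : MvPolynomial σ F)
        - monomial (Finsupp.mapDomain (Equiv.swap i j) u) 1 := by
  have hu : (monomial u 1 : MvPolynomial σ F)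
      = monomial ((u.erase i).erase j) 1 * X i ^ (u i) * X j ^ (u j) := by
    conv_lhs => rw [← u_decomp i j hij u]
    rw [monomial_decomp i j hij u]
  rw [Gq, ← mul_assoc, mul_comm (X i - X j), mul_assoc, mul_sub, telescope, telescope,
    mapDomain_swap i j hij u, hu, monomial_decomp i j hij u]
  rw [Nat.add_comm (u j) (u i)]
  ring

lemma Gq_deg (i j : σ) (hij : i ≠ j) (u : σ →₀ ℕ) (d : ℕ) (hd : 1 ≤ d)
    (hu : (u.sum fun _ e => e) ≤ d) : (Gq (F := F) i j u).totalDegree ≤ d - 1 := by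
  have husum : (u.sum fun _ e => e)
      = (((u.erase i).erase j).sum fun _ e => e) + u i + u j := by
    conv_lhs => rw [← u_decomp i j hij u]
    rw [Finsupp.sum_add_index' (fun _ => rfl) (fun _ _ _ => rfl),
      Finsupp.sum_add_index' (fun _ => rfl) (fun _ _ _ => rfl),
      Finsupp.sum_single_index rfl, Finsupp.sum_single_index rfl]
  have hmono : ((monomial ((u.erase i).erase j) (1 : F)).totalDegree)
      = (((u.erase i).erase j).sum fun _ e => e) := totalDegree_monomial _ one_ne_zero
  rcases Nat.eq_zero_or_pos (u i + u j) with h0 | hpos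
  · have : Gq (F := F) i j u = 0 := by
      rw [Gq]
      have h1 : u i = 0 := by omega
      have h2 : u j = 0 := by omega
      rw [h1, h2]
      simp
    rw [this]
    simp
  · rw [Gq]
    apply le_trans (totalDegree_mul _ _)
    rw [hmono]
    have hsum : ∀ (a b : ℕ),
        ((∑ r ∈ Finset.range a, X i ^ r * X j ^ ((a - 1 - r) + b) : MvPolynomial σ F)).totalDegree
          ≤ a + b - 1 := by
      intro a b
      apply le_trans (totalDegree_finset_sum _ _)
      apply Finset.sup_le
      intro r hr
      simp only [Finset.mem_range] at hr
      apply le_trans (totalDegree_mul _ _)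
      rw [totalDegree_X_pow, totalDegree_X_pow]
      omega
    apply le_trans (add_le_add_right (le_trans (totalDegree_sub _ _)
      (max_le (hsum (u i) (u j)) (le_trans (hsum (u j) (u i)) (by omega)))) _)
    omega

lemma exists_factor (i j : σ) (hij : i ≠ j) (Q : MvPolynomial σ F) (d : ℕ)
    (hd : 1 ≤ d) (hQ : Q.totalDegree ≤ d) :
    ∃ E : MvPolynomial σ F,
      Q - rename (Equiv.swap i j) Q = (X i - X j) * E ∧ E.totalDegree ≤ d - 1 := by
  refine ⟨∑ u ∈ Q.support, Q.coeff u • Gq i j u, ?_, ?_⟩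
  · conv_lhs => rw [as_sum Q]
    rw [map_sum, ← Finset.sum_sub_distrib, Finset.mul_sum]
    apply Finset.sum_congr rfl
    intro u hu
    rw [rename_monomial, mul_smul_comm, Gq_mul i j hij u, smul_sub,
      smul_monomial, smul_monomial, smul_eq_mul, mul_one]
  · apply le_trans (totalDegree_finset_sum _ _)
    apply Finset.sup_le
    intro u hu
    exact le_trans (totalDegree_smul_le _ _)
      (Gq_deg i j hij u d hd (le_trans (le_totalDegree hu) hQ))

/-! ## Special balanced tuples -/

variable [DecidableEq F]

def lift (t : ℕ) (z : Fin t → F) : ℕ → F :=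
  fun n => if h : n < t then z ⟨n, h⟩ else 0

lemma lift_eq (t : ℕ) (z : Fin t → F) (n : ℕ) (h : n < t) : lift t z n = z ⟨n, h⟩ :=
  dif_pos h

/-- tuples whose first `s` coords are injective (hence enumerate `S`) and which agree
with a base tuple `g` elsewhere -/
def SpecialZ (S : Finset F) (s t : ℕ) (g : Fin t → F) (z : Fin t → F) : Prop :=
  (∀ i, z i ∈ S) ∧ Set.InjOn z {i : Fin t | (i : ℕ) < s} ∧
    ∀ i : Fin t, s ≤ (i : ℕ) → z i = g i

lemma SpecialZ.swap {S : Finset F} {s t : ℕ} {g z : Fin t → F}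
    (hz : SpecialZ S s t g z) (i j : Fin t) (hi : (i : ℕ) < s) (hj : (j : ℕ) < s) :
    SpecialZ S s t g (z ∘ Equiv.swap i j) := by
  obtain ⟨h1, h2, h3⟩ := hz
  have hmem : ∀ k : Fin t, (k : ℕ) < s → ((Equiv.swap i j k : Fin t) : ℕ) < s := by
    intro k hk
    rcases eq_or_ne k i with rfl | hki
    · rw [Equiv.swap_apply_left]; exact hj
    rcases eq_or_ne k j with rfl | hkj
    · rw [Equiv.swap_apply_right]; exact hi
    · rw [Equiv.swap_apply_of_ne_of_ne hki hkj]; exact hk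
  refine ⟨fun k => h1 _, ?_, ?_⟩
  · intro a ha b hb hab
    simp only [Set.mem_setOf_eq, Function.comp_apply] at ha hb hab
    have := h2 (Set.mem_setOf_eq ▸ hmem a ha) (Set.mem_setOf_eq ▸ hmem b hb) hab
    exact (Equiv.swap i j).injective this
  · intro k hk
    have hki : k ≠ i := by intro h; subst h; omega
    have hkj : k ≠ j := by intro h; subst h; omega
    simp only [Function.comp_apply, Equiv.swap_apply_of_ne_of_ne hki hkj]
    exact h3 k hk

lemma count_low {S : Finset F} {s t : ℕ} {g z : Fin t → F} (hst : s ≤ t)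
    (hS : S.card = s) (hz : SpecialZ S s t g z) (a : F) (ha : a ∈ S) :
    (Finset.univ.filter fun i : Fin t => z i = a ∧ (i : ℕ) < s).card = 1 := by
  obtain ⟨h1, h2, h3⟩ := hz
  set u : Fin s → F := fun n => z ⟨(n : ℕ), lt_of_lt_of_le n.2 hst⟩ with hu
  have huinj : Function.Injective u := by
    intro n1 n2 h
    have := h2 (show (⟨(n1 : ℕ), lt_of_lt_of_le n1.2 hst⟩ : Fin t) ∈ {i : Fin t | (i : ℕ) < s}
        from by simpa using n1.2)
      (show (⟨(n2 : ℕ), lt_of_lt_of_le n2.2 hst⟩ : Fin t) ∈ {i : Fin t | (i : ℕ) < s}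
        from by simpa using n2.2) h
    simp only [Fin.mk.injEq] at this
    exact Fin.ext this
  have himg : Finset.univ.image u = S := by
    apply Finset.eq_of_subset_of_card_le
    · intro x hx
      simp only [Finset.mem_image] at hx
      obtain ⟨n, _, rfl⟩ := hx
      exact h1 _
    · rw [Finset.card_image_of_injective _ huinj, Finset.card_univ, Fintype.card_fin, hS]
  have : a ∈ Finset.univ.image u := himg ▸ ha
  simp only [Finset.mem_image] at this
  obtain ⟨n₀, _, hn₀⟩ := this
  rw [Finset.card_eq_one]
  refine ⟨⟨(n₀ : ℕ), lt_of_lt_of_le n₀.2 hst⟩, ?_⟩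
  ext i
  simp only [Finset.mem_filter, Finset.mem_univ, true_and, Finset.mem_singleton]
  constructor
  · rintro ⟨hia, his⟩
    exact h2 (Set.mem_setOf_eq ▸ his) (by simp [n₀.2]) (by rw [hia, ← hn₀])
  · rintro rfl
    exact ⟨hn₀, n₀.2⟩

lemma special_balanced {S : Finset F} {s t : ℕ} {g z : Fin t → F} (hst : s ≤ t)
    (hS : S.card = s)
    (hgcount : ∀ a ∈ S, (Finset.univ.filter fun i : Fin t => g i = a).card = t / S.card)
    (hg : SpecialZ S s t g g) (hz : SpecialZ S s t g z) :
    IsBalancedTuple S t z := by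
  refine ⟨hz.1, fun a ha => ?_⟩
  have split : ∀ w : Fin t → F,
      (Finset.univ.filter fun i : Fin t => w i = a).card
        = (Finset.univ.filter fun i : Fin t => w i = a ∧ (i : ℕ) < s).card
          + (Finset.univ.filter fun i : Fin t => w i = a ∧ ¬ ((i : ℕ) < s)).card := by
    intro w
    rw [← Finset.filter_filter, ← Finset.filter_filter,
      Finset.card_filter_add_card_filter_not]
  have tails : (Finset.univ.filter fun i : Fin t => z i = a ∧ ¬ ((i : ℕ) < s)).card
      = (Finset.univ.filter fun i : Fin t => g i = a ∧ ¬ ((i : ℕ) < s)).card := by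
    congr 1
    apply Finset.filter_congr
    intro i _
    constructor
    · rintro ⟨h1, h2⟩; exact ⟨(hz.2.2 i (by omega)) ▸ h1, h2⟩
    · rintro ⟨h1, h2⟩; rw [hz.2.2 i (by omega)]; exact ⟨h1, h2⟩
  rw [split, count_low hst hS hz a ha, tails]
  have := split g
  rw [count_low hst hS hg a ha, hgcount a ha] at this
  omega

lemma count_mod (s t : ℕ) (hs : 0 < s) (ht : t = s ^ 3) (r : ℕ) (hr : r < s) :
    (Finset.univ.filter fun i : Fin t => (i : ℕ) % s = r).card = s * s := by
  have hts : t = (s * s) * s := by rw [ht]; ring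
  have h1 : (Finset.univ.filter fun i : Fin t => (i : ℕ) % s = r).card
      = (Finset.univ : Finset (Fin (s * s))).card := by
    refine Finset.card_bij' (i := fun (a : Fin t) _ => (⟨(a : ℕ) / s, by
        rw [Nat.div_lt_iff_lt_mul hs, ← hts]; exact a.2⟩ : Fin (s * s)))
      (j := fun (b : Fin (s * s)) _ => (⟨(b : ℕ) * s + r, by
        rw [hts]; calc (b : ℕ) * s + r < (b : ℕ) * s + s := by omega
          _ = ((b : ℕ) + 1) * s := by ring
          _ ≤ (s * s) * s := Nat.mul_le_mul_right s b.2⟩ : Fin t))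
      ?hi ?hj ?left ?right
    case hi => intro a ha; exact Finset.mem_univ _
    case hj =>
      intro b hb
      simp only [Finset.mem_filter, Finset.mem_univ, true_and]
      show ((b : ℕ) * s + r) % s = r
      rw [Nat.add_comm, Nat.add_mul_mod_self_right]
      exact Nat.mod_eq_of_lt hr
    case left =>
      intro a ha
      simp only [Finset.mem_filter, Finset.mem_univ, true_and] at ha
      apply Fin.ext
      simp only
      calc (a : ℕ) / s * s + r = s * ((a : ℕ) / s) + (a : ℕ) % s := by rw [ha]; ring_nf
        _ = (a : ℕ) := Nat.div_add_mod _ _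
    case right =>
      intro b hb
      apply Fin.ext
      simp only
      rw [show (b : ℕ) * s + r = s * (b : ℕ) + r by ring, Nat.mul_add_div hs,
        Nat.div_eq_of_lt hr, Nat.add_zero]
  rw [h1, Finset.card_univ, Fintype.card_fin]

lemma exists_g (S : Finset F) (s t : ℕ) (hs : 2 ≤ s) (hS : S.card = s) (ht : t = s ^ 3) :
    ∃ g : Fin t → F, SpecialZ S s t g g ∧
      ∀ a ∈ S, (Finset.univ.filter fun i : Fin t => g i = a).card = t / S.card := by
  have hs0 : 0 < s := by omega
  let e : Fin s ≃ {x // x ∈ S} := ((S.equivFin).trans (finCongr hS)).symm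
  refine ⟨fun i => ((e ⟨(i : ℕ) % s, Nat.mod_lt _ hs0⟩ : {x // x ∈ S}) : F),
    ⟨fun i => (e _).2, ?_, fun i _ => rfl⟩, ?_⟩
  · intro i hi j hj hij
    simp only [Set.mem_setOf_eq] at hi hj
    have h1 := Subtype.coe_injective hij
    have h2 := e.injective h1
    simp only [Fin.mk.injEq] at h2
    rw [Nat.mod_eq_of_lt hi, Nat.mod_eq_of_lt hj] at h2
    exact Fin.ext h2
  · intro a ha
    have hfc : (Finset.univ.filter
          fun i : Fin t => ((e ⟨(i : ℕ) % s, Nat.mod_lt _ hs0⟩ : {x // x ∈ S}) : F) = a)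
        = Finset.univ.filter fun i : Fin t => (i : ℕ) % s = ((e.symm ⟨a, ha⟩ : Fin s) : ℕ) := by
      apply Finset.filter_congr
      intro i _
      constructor
      · intro h
        have h1 : e ⟨(i : ℕ) % s, Nat.mod_lt _ hs0⟩ = ⟨a, ha⟩ := Subtype.coe_injective h
        have h2 : (⟨(i : ℕ) % s, Nat.mod_lt _ hs0⟩ : Fin s) = e.symm ⟨a, ha⟩ := by
          rw [← h1, Equiv.symm_apply_apply]
        exact congrArg Fin.val h2
      · intro h
        have h2 : (⟨(i : ℕ) % s, Nat.mod_lt _ hs0⟩ : Fin s) = e.symm ⟨a, ha⟩ := Fin.ext h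
        rw [h2, Equiv.apply_symm_apply]
    rw [hfc, count_mod s t hs0 ht _ (e.symm ⟨a, ha⟩).2, hS, ht]
    rw [show s ^ 3 = (s * s) * s by ring, Nat.mul_div_cancel _ hs0]

lemma Hc_diff (s t : ℕ) (hst : s ≤ t) (d m₀ : ℕ) (hm : m₀ + 1 < s) (z : Fin t → F) :
    Hc F (d+1) (m₀+1) (lift t z)
      - Hc F (d+1) (m₀+1) (lift t (z ∘ Equiv.swap
          (⟨m₀, by omega⟩ : Fin t) (⟨m₀+1, by omega⟩ : Fin t)))
      = (z ⟨m₀, by omega⟩ - z ⟨m₀+1, by omega⟩) * Hc F d (m₀+2) (lift t z) := by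
  have hm0t : m₀ < t := by omega
  have hm1t : m₀ + 1 < t := by omega
  set im1 : Fin t := ⟨m₀, hm0t⟩
  set im : Fin t := ⟨m₀+1, hm1t⟩
  have hne : im1 ≠ im := by
    intro h
    have := congrArg Fin.val h
    simp [im1, im] at this
  have h1 : Function.update (lift t z) m₀ (z im1) = lift t z := by
    rw [← lift_eq t z m₀ hm0t, Function.update_eq_self]
  have h1' : Function.update (lift t z) (m₀+1) (z im) = lift t z := by
    rw [← lift_eq t z (m₀+1) hm1t, Function.update_eq_self]
  have h2 : Hc F (d+1) (m₀+1) (lift t (z ∘ Equiv.swap im1 im))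
      = Hc F (d+1) (m₀+1) (Function.update (lift t z) m₀ (z im)) := by
    apply Hc_congr
    intro n hn
    rcases Nat.lt_or_ge n m₀ with h | h
    · have hnt : n < t := by omega
      rw [lift_eq t _ n hnt, Function.update_of_ne (by omega), lift_eq t z n hnt]
      simp only [Function.comp_apply]
      congr 1
      apply Equiv.swap_apply_of_ne_of_ne
      · intro hc; have := congrArg Fin.val hc; simp [im1] at this; omega
      · intro hc; have := congrArg Fin.val hc; simp [im] at this; omega
    · have hnm : n = m₀ := by omega
      subst hnm
      rw [lift_eq t _ n hm0t, Function.update_self]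
      simp only [Function.comp_apply]
      congr 1
      exact Equiv.swap_apply_left _ _
  have h3 : Function.update (Function.update (lift t z) m₀ (z im1)) (m₀+1) (z im)
      = lift t z := by rw [h1, h1']
  calc Hc F (d+1) (m₀+1) (lift t z) - Hc F (d+1) (m₀+1) (lift t (z ∘ Equiv.swap im1 im))
      = Hc F (d+1) (m₀+1) (Function.update (lift t z) m₀ (z im1))
        - Hc F (d+1) (m₀+1) (Function.update (lift t z) m₀ (z im)) := by rw [h1, h2]
    _ = (z im1 - z im) * Hc F d (m₀+2)
        (Function.update (Function.update (lift t z) m₀ (z im1)) (m₀+1) (z im)) :=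
      Hc_sub d m₀ (lift t z) (z im1) (z im)
    _ = (z im1 - z im) * Hc F d (m₀+2) (lift t z) := by rw [h3]

lemma eq_C_of_deg0 (p : MvPolynomial (Fin t) F) (h : p.totalDegree = 0) :
    p = C (coeff 0 p) := by
  rw [totalDegree_eq_zero_iff] at h
  apply MvPolynomial.ext
  intro m
  rcases eq_or_ne m 0 with rfl | hm
  · simp
  · rw [coeff_C, if_neg (Ne.symm hm)]
    by_contra hc
    have hmem : m ∈ p.support := by
      rw [MvPolynomial.mem_support_iff]
      exact hc
    exact hm (Finsupp.ext fun x => h m hmem x)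

lemma key (S : Finset F) (s t : ℕ) (hs : 2 ≤ s) (hst : s ≤ t) (g : Fin t → F)
    (hg : SpecialZ S s t g g) :
    ∀ d₀ m₀ : ℕ, (d₀ + 1) + (m₀ + 1) ≤ s →
    ∀ Q : MvPolynomial (Fin t) F, Q.totalDegree < d₀ + 1 →
    ¬ (∀ z, SpecialZ S s t g z → eval z Q = Hc F (d₀+1) (m₀+1) (lift t z)) := by
  intro d₀
  induction d₀ with
  | zero =>
    intro m₀ hcon Q hdeg hagree
    have hm : m₀ + 1 < s := by omega
    have hm0t : m₀ < t := by omega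
    have hm1t : m₀ + 1 < t := by omega
    set im1 : Fin t := ⟨m₀, hm0t⟩
    set im : Fin t := ⟨m₀+1, hm1t⟩
    have hQC : Q = C (coeff 0 Q) := eq_C_of_deg0 Q (by omega)
    have hswap := SpecialZ.swap hg im1 im (by simp [im1]; omega) (by simp [im]; omega)
    have e1 := hagree g hg
    have e2 := hagree _ hswap
    rw [hQC, eval_C] at e1 e2
    have e3 := Hc_diff s t hst 0 m₀ hm g
    rw [← e1, ← e2, sub_self] at e3
    simp only [Hc_zero, mul_one] at e3
    have hne : g im1 ≠ g im := by
      intro hc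
      have := hg.2.1 (show im1 ∈ {i : Fin t | (i : ℕ) < s} by simp [im1]; omega)
        (show im ∈ {i : Fin t | (i : ℕ) < s} by simp [im]; omega) hc
      have := congrArg Fin.val this
      simp [im1, im] at this
    exact hne (sub_eq_zero.mp e3.symm)
  | succ n ih =>
    intro m₀ hcon Q hdeg hagree
    have hm : m₀ + 1 < s := by omega
    have hm0t : m₀ < t := by omega
    have hm1t : m₀ + 1 < t := by omega
    set im1 : Fin t := ⟨m₀, hm0t⟩
    set im : Fin t := ⟨m₀+1, hm1t⟩
    have hne : im1 ≠ im := by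
      intro h; have := congrArg Fin.val h; simp [im1, im] at this
    obtain ⟨E, hE, hdegE⟩ := exists_factor im1 im hne Q (n+1) (by omega) (by omega)
    refine ih (m₀+1) (by omega) E (by omega) ?_
    intro z hz
    have hswap := SpecialZ.swap hz im1 im (by simp [im1]; omega) (by simp [im]; omega)
    have e1 := hagree z hz
    have e2 := hagree _ hswap
    have e3 : eval z Q - eval z (rename (Equiv.swap im1 im) Q)
        = (z im1 - z im) * Hc F (n+1) (m₀+2) (lift t z) := by
      rw [eval_rename, e1, e2]
      exact Hc_diff s t hst (n+1) m₀ hm z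
    have e4 : eval z Q - eval z (rename (Equiv.swap im1 im) Q)
        = (z im1 - z im) * eval z E := by
      rw [← map_sub, hE, map_mul, map_sub, eval_X, eval_X]
    have hzne : z im1 ≠ z im := by
      intro hc
      have := hz.2.1 (show im1 ∈ {i : Fin t | (i : ℕ) < s} by simp [im1]; omega)
        (show im ∈ {i : Fin t | (i : ℕ) < s} by simp [im]; omega) hc
      have := congrArg Fin.val this
      simp [im1, im] at this
    have := e4.symm.trans e3
    exact mul_left_cancel₀ (sub_ne_zero.mpr hzne) this

end Stmt10Aux

open Stmt10Aux MvPolynomial in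
theorem stmt10 {F : Type*} [Field F] [DecidableEq F] (S : Finset F) (s : ℕ)
    (hs : 2 ≤ s) (hS : S.card = s) (t : ℕ) (ht : t = s ^ 3)
    (d' : ℕ) (hd' : d' ≤ s - 1) :
    (∃ P : MvPolynomial (Fin t) F, P.totalDegree ≤ d' ∧
      ∀ z : Fin t → F, IsBalancedTuple S t z →
        MvPolynomial.eval z P = z ⟨0, by subst ht; exact pow_pos (by omega) 3⟩ ^ d')
    ∧ (1 ≤ d' →
        ¬ ∃ P : MvPolynomial (Fin t) F, P.totalDegree ≤ d' - 1 ∧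
          ∀ z : Fin t → F, IsBalancedTuple S t z →
            MvPolynomial.eval z P = z ⟨0, by subst ht; exact pow_pos (by omega) 3⟩ ^ d') := by
  have h0t : 0 < t := by subst ht; exact pow_pos (by omega) 3
  have hst : s ≤ t := by subst ht; exact Nat.le_self_pow (by omega) s
  constructor
  · refine ⟨(X ⟨0, h0t⟩) ^ d', le_of_eq (totalDegree_X_pow _ _), fun z hz => ?_⟩
    rw [map_pow, eval_X]
  · intro hd1
    rintro ⟨P, hdeg, heval⟩
    obtain ⟨d₀, rfl⟩ : ∃ d₀, d' = d₀ + 1 := ⟨d' - 1, by omega⟩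
    obtain ⟨g, hg, hgcount⟩ := exists_g S s t hs hS ht
    refine key S s t hs hst g hg d₀ 0 (by omega) P (by omega) ?_
    intro z hz
    have hbal := special_balanced hst hS hgcount hg hz
    rw [heval z hbal, Hc_one_var, lift_eq t z 0 h0t]
end

section
/- Let F be a field, S ⊆ F a finite set with |S| = s ≥ 2, t = s³, and w ≥ 1. Consider polynomials over F in the variables y_{(i,j)} for (i,j) ∈ {1,…,t} × {1,…,w}, and the domain B(S,t)^w ⊆ S^{t×w} of points whose j-th column (y_{(1,j)},…,y_{(t,j)}) is a balanced tuple for every j ∈ {1,…,w}. Let Q be a nonzero polynomial of total degree d' whose degree in each individual variable is at most s−1 and which involves only the first-row variables y_{(1,1)},…,y_{(1,w)}. Then no polynomial of total degree strictly less than d' agrees with Q on B(S,t)^w; that is, Q has degree exactly d' as a function on B(S,t)^w. -/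
open MvPolynomial Finset

namespace Stmt11Aux

set_option linter.unusedSectionVars false

variable {F : Type*} [Field F] [DecidableEq F] (S : Finset F) (s w : ℕ)

/-- the index of the variable in row `i` (mod `s`), column `j`. -/
def vmap (hs : 0 < s) (j : Fin w) (i : ℕ) : Fin s × Fin w :=
  (⟨i % s, Nat.mod_lt _ hs⟩, j)

/-- coefficients of the successive quotients of `∏ (X - a)` by `(X - y_{i,j})`. -/
noncomputable def cpol (hs : 0 < s) (j : Fin w) : ℕ → ℕ → MvPolynomial (Fin s × Fin w) F
  | 0 => fun k => C ((∏ a ∈ S, (Polynomial.X - Polynomial.C a)).coeff k)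
  | (i+1) => fun k =>
      ∑ l ∈ Finset.Ioc k s, cpol hs j i l * (X (vmap s w hs j i)) ^ (l - 1 - k)

variable {S s w}

lemma sprod_monic : (∏ a ∈ S, (Polynomial.X - Polynomial.C a)).Monic :=
  Polynomial.monic_prod_of_monic _ _ (fun a _ => Polynomial.monic_X_sub_C a)

lemma sprod_natDegree (hS : S.card = s) :
    (∏ a ∈ S, (Polynomial.X - Polynomial.C a)).natDegree = s := by
  rw [Polynomial.natDegree_prod_of_monic _ _ (fun a _ => Polynomial.monic_X_sub_C a)]
  simp [hS]

lemma cpol_eq_zero (hs : 0 < s) (hS : S.card = s) (j : Fin w) (i : ℕ) :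
    ∀ k, s - i < k → cpol S s w hs j i k = (0 : MvPolynomial (Fin s × Fin w) F) := by
  induction i with
  | zero =>
    intro k hk
    simp only [cpol]
    rw [Polynomial.coeff_eq_zero_of_natDegree_lt, map_zero]
    rw [sprod_natDegree hS]; omega
  | succ i ih =>
    intro k hk
    simp only [cpol]
    refine Finset.sum_eq_zero fun l hl => ?_
    rw [ih l (by simp only [Finset.mem_Ioc] at hl; omega), zero_mul]

lemma cpol_lead (hs : 0 < s) (hS : S.card = s) (j : Fin w) (i : ℕ) (hi : i ≤ s) :
    cpol S s w hs j i (s - i) = (1 : MvPolynomial (Fin s × Fin w) F) := by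
  induction i with
  | zero =>
    simp only [cpol, Nat.sub_zero]
    rw [← sprod_natDegree (S := S) hS, Polynomial.Monic.coeff_natDegree sprod_monic, map_one]
  | succ i ih =>
    simp only [cpol]
    rw [Finset.sum_eq_single (s - i)]
    · rw [ih (by omega)]
      have h0 : s - i - 1 - (s - (i+1)) = 0 := by omega
      rw [h0, pow_zero, one_mul]
    · intro l hl hne
      simp only [Finset.mem_Ioc] at hl
      rw [cpol_eq_zero hs hS j i l (by omega), zero_mul]
    · intro h
      exact absurd (Finset.mem_Ioc.mpr ⟨by omega, by omega⟩) h

lemma cpol_totalDegree (hs : 0 < s) (hS : S.card = s) (j : Fin w) (i : ℕ) :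
    ∀ k, (cpol S s w hs j i k : MvPolynomial (Fin s × Fin w) F).totalDegree ≤ s - i - k := by
  induction i with
  | zero => intro k; simp [cpol]
  | succ i ih =>
    intro k
    simp only [cpol]
    refine le_trans (MvPolynomial.totalDegree_finset_sum _ _) (Finset.sup_le fun l hl => ?_)
    simp only [Finset.mem_Ioc] at hl
    by_cases hls : s - i < l
    · rw [cpol_eq_zero hs hS j i l hls, zero_mul]
      simp
    · refine le_trans (MvPolynomial.totalDegree_mul _ _) ?_
      have h1 := ih l
      have h2 : (X (σ := Fin s × Fin w) (R := F) (vmap s w hs j i) ^ (l - 1 - k)).totalDegree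
          ≤ l - 1 - k := by
        refine le_trans (MvPolynomial.totalDegree_pow _ _) ?_
        simp [MvPolynomial.totalDegree_X]
      refine le_trans (Nat.add_le_add h1 h2) ?_
      omega

lemma cpol_vars (hs : 0 < s) (j : Fin w) (i : ℕ) (hi : i ≤ s) :
    ∀ k, ∀ q ∈ (cpol S s w hs j i k : MvPolynomial (Fin s × Fin w) F).vars,
      q.2 = j ∧ (q.1 : ℕ) < i := by
  induction i with
  | zero => intro k q hq; simp [cpol, MvPolynomial.vars_C] at hq
  | succ i ih =>
    intro k q hq
    simp only [cpol] at hq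
    have h1 := MvPolynomial.vars_sum_subset (Finset.Ioc k s)
      (fun l => cpol S s w hs j i l * (X (vmap s w hs j i)) ^ (l - 1 - k)) hq
    simp only [Finset.mem_biUnion] at h1
    obtain ⟨l, _, hql⟩ := h1
    have h2 := MvPolynomial.vars_mul _ _ hql
    simp only [Finset.mem_union] at h2
    rcases h2 with h | h
    · obtain ⟨h1, h2⟩ := ih (by omega) l q h
      exact ⟨h1, by omega⟩
    · have h3 := MvPolynomial.vars_pow _ _ h
      rw [MvPolynomial.vars_X] at h3
      simp only [Finset.mem_singleton] at h3
      subst h3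
      refine ⟨rfl, ?_⟩
      show i % s < i + 1
      exact lt_of_le_of_lt (Nat.mod_le i s) (Nat.lt_succ_self i)

/-- Univariate telescoping identity: multiplying the quotient coefficients by `(X - v)`. -/
lemma UL (γ : ℕ → F) (v : F) (n : ℕ) :
    (∑ k ∈ Finset.range (n+1),
        Polynomial.C (∑ l ∈ Finset.Ioc k n, γ l * v ^ (l - 1 - k)) * Polynomial.X ^ k)
      * (Polynomial.X - Polynomial.C v)
    = (∑ l ∈ Finset.range (n+1), Polynomial.C (γ l) * Polynomial.X ^ l)
      - Polynomial.C (∑ l ∈ Finset.range (n+1), γ l * v ^ l) := by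
  rw [Finset.sum_mul]
  have step1 : ∀ k ∈ Finset.range (n+1),
      (Polynomial.C (∑ l ∈ Finset.Ioc k n, γ l * v ^ (l-1-k)) * Polynomial.X ^ k)
        * (Polynomial.X - Polynomial.C v)
      = ∑ l ∈ Finset.Ioc k n, Polynomial.C (γ l) *
          ((Polynomial.X ^ k * Polynomial.C v ^ (l-1-k)) * (Polynomial.X - Polynomial.C v)) := by
    intro k _
    rw [map_sum, Finset.sum_mul, Finset.sum_mul]
    refine Finset.sum_congr rfl fun l _ => ?_
    rw [map_mul, map_pow]; ring
  rw [Finset.sum_congr rfl step1]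
  rw [Finset.sum_comm' (t' := Finset.range (n+1)) (s' := fun l => Finset.range l)
    (by intro k l; simp only [Finset.mem_range, Finset.mem_Ioc]; omega)]
  have step2 : ∀ l ∈ Finset.range (n+1),
      (∑ k ∈ Finset.range l, Polynomial.C (γ l) *
          ((Polynomial.X ^ k * Polynomial.C v ^ (l-1-k)) * (Polynomial.X - Polynomial.C v)))
      = Polynomial.C (γ l) * Polynomial.X ^ l - Polynomial.C (γ l * v ^ l) := by
    intro l _
    rw [← Finset.mul_sum, ← Finset.sum_mul, geom_sum₂_mul, map_mul, map_pow, mul_sub]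
  rw [Finset.sum_congr rfl step2, Finset.sum_sub_distrib, map_sum]

variable (S s w) in
/-- The index set of domain points: tuples of rainbow columns. -/
abbrev Edom := Fin w → (Fin s ≃ {x // x ∈ S})

variable (s w) in
/-- The domain point corresponding to an index. -/
def θ (e : Edom S s w) : Fin s × Fin w → F := fun p => ((e p.2 p.1 : F))

variable (S s w) in
/-- univariate polynomial whose coefficients are the evaluated `cpol`s. -/
noncomputable def pe (hs : 0 < s) (e : Edom S s w) (j : Fin w) (i : ℕ) : Polynomial F :=
  ∑ k ∈ Finset.range (s+1),
    Polynomial.C (eval (θ s w e) (cpol S s w hs j i k)) * Polynomial.X ^ k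

lemma eval_zero_of_prod (hs : 0 < s) (e : Edom S s w) (j : Fin w) (i : ℕ) (hi : i < s)
    (P : Polynomial F)
    (hp : P * (∏ i' ∈ Finset.univ.filter (fun i' : Fin s => (i' : ℕ) < i),
        (Polynomial.X - Polynomial.C ((e j i' : F)))) = ∏ a ∈ S, (Polynomial.X - Polynomial.C a)) :
    P.eval ((e j ⟨i, hi⟩ : F)) = 0 := by
  set vi := ((e j ⟨i, hi⟩ : F)) with hvi
  have h := congrArg (Polynomial.eval vi) hp
  rw [Polynomial.eval_mul, Polynomial.eval_prod, Polynomial.eval_prod] at h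
  have hz : ∏ a ∈ S, Polynomial.eval vi (Polynomial.X - Polynomial.C a) = 0 := by
    refine Finset.prod_eq_zero (i := vi) (e j ⟨i, hi⟩).2 ?_
    simp
  rw [hz] at h
  have hnz : ∏ i' ∈ Finset.univ.filter (fun i' : Fin s => (i' : ℕ) < i),
      Polynomial.eval vi (Polynomial.X - Polynomial.C ((e j i' : F))) ≠ 0 := by
    rw [Finset.prod_ne_zero_iff]
    intro i' hi'
    simp only [Finset.mem_filter] at hi'
    simp only [Polynomial.eval_sub, Polynomial.eval_X, Polynomial.eval_C]
    refine sub_ne_zero.mpr (Subtype.coe_injective.ne ((e j).injective.ne ?_))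
    intro hcon
    rw [← hcon] at hi'
    exact absurd hi'.2 (by simp)
  rcases mul_eq_zero.mp h with h | h
  · exact h
  · exact absurd h hnz

lemma pe_prod (hs : 0 < s) (hS : S.card = s) (e : Edom S s w) (j : Fin w) :
    ∀ i, i ≤ s →
      pe S s w hs e j i * (∏ i' ∈ Finset.univ.filter (fun i' : Fin s => (i' : ℕ) < i),
          (Polynomial.X - Polynomial.C ((e j i' : F))))
        = ∏ a ∈ S, (Polynomial.X - Polynomial.C a) := by
  intro i
  induction i with
  | zero =>
    intro _
    have hempty : Finset.univ.filter (fun i' : Fin s => (i' : ℕ) < 0) = ∅ := by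
      ext i'; simp
    rw [hempty, Finset.prod_empty, mul_one]
    have hdeg : (∏ a ∈ S, (Polynomial.X - Polynomial.C a)).natDegree < s + 1 := by
      rw [sprod_natDegree hS]; omega
    conv_rhs => rw [Polynomial.as_sum_range' _ _ hdeg]
    refine Finset.sum_congr rfl fun k _ => ?_
    simp only [pe, cpol]
    simp only [eval_C, Polynomial.C_mul_X_pow_eq_monomial]
  | succ i ih =>
    intro hi1
    have hi : i < s := by omega
    set vi := ((e j ⟨i, hi⟩ : F)) with hvi
    have hprev := ih (by omega)
    have heval0 : (pe S s w hs e j i).eval vi = 0 :=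
      eval_zero_of_prod hs e j i hi _ hprev
    -- pe (i+1) * (X - C vi) = pe i
    have hkey : pe S s w hs e j (i+1) * (Polynomial.X - Polynomial.C vi) = pe S s w hs e j i := by
      have hXvi : eval (θ s w e) (X (vmap s w hs j i) : MvPolynomial (Fin s × Fin w) F) = vi := by
        rw [eval_X]
        simp only [θ, vmap]
        congr 2
        exact Fin.ext (Nat.mod_eq_of_lt hi)
      have hcoeff : ∀ k, eval (θ s w e) (cpol S s w hs j (i+1) k)
          = ∑ l ∈ Finset.Ioc k s, eval (θ s w e) (cpol S s w hs j i l) * vi ^ (l - 1 - k) := by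
        intro k
        simp only [cpol]
        rw [map_sum]
        refine Finset.sum_congr rfl fun l _ => ?_
        rw [map_mul, map_pow, hXvi]
      have hpe1 : pe S s w hs e j (i+1)
          = ∑ k ∈ Finset.range (s+1),
              Polynomial.C (∑ l ∈ Finset.Ioc k s,
                eval (θ s w e) (cpol S s w hs j i l) * vi ^ (l - 1 - k)) * Polynomial.X ^ k := by
        simp only [pe]
        refine Finset.sum_congr rfl fun k _ => ?_
        rw [hcoeff]
      rw [hpe1, UL]
      have hev : ∑ l ∈ Finset.range (s+1),
          eval (θ s w e) (cpol S s w hs j i l) * vi ^ l = (pe S s w hs e j i).eval vi := by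
        simp only [pe]
        rw [Polynomial.eval_finset_sum]
        refine Finset.sum_congr rfl fun l _ => ?_
        rw [Polynomial.eval_mul, Polynomial.eval_C, Polynomial.eval_pow, Polynomial.eval_X]
      rw [hev, heval0, map_zero, sub_zero]
      simp only [pe]
    have hins : Finset.univ.filter (fun i' : Fin s => (i' : ℕ) < i + 1)
        = insert ⟨i, hi⟩ (Finset.univ.filter (fun i' : Fin s => (i' : ℕ) < i)) := by
      ext i'
      simp only [Finset.mem_filter, Finset.mem_insert, Finset.mem_univ, true_and, Fin.ext_iff]
      omega
    rw [hins, Finset.prod_insert (by simp), ← mul_assoc, hkey, hprev]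

variable (S s w) in
/-- relation polynomial: vanishes on the domain. -/
noncomputable def rpol (hs : 0 < s) (j : Fin w) (i : ℕ) : MvPolynomial (Fin s × Fin w) F :=
  ∑ k ∈ Finset.range (s+1), cpol S s w hs j i k * (X (vmap s w hs j i)) ^ k

lemma rpol_eval_zero (hs : 0 < s) (hS : S.card = s) (e : Edom S s w) (j : Fin w) (i : ℕ)
    (hi : i < s) : eval (θ s w e) (rpol S s w hs j i) = 0 := by
  have hXvi : eval (θ s w e) (X (vmap s w hs j i) : MvPolynomial (Fin s × Fin w) F)
      = ((e j ⟨i, hi⟩ : F)) := by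
    rw [eval_X]
    simp only [θ, vmap]
    congr 2
    exact Fin.ext (Nat.mod_eq_of_lt hi)
  have h : eval (θ s w e) (rpol S s w hs j i) = (pe S s w hs e j i).eval ((e j ⟨i, hi⟩ : F)) := by
    simp only [rpol, pe]
    rw [map_sum, Polynomial.eval_finset_sum]
    refine Finset.sum_congr rfl fun k _ => ?_
    rw [map_mul, map_pow, hXvi, Polynomial.eval_mul, Polynomial.eval_C, Polynomial.eval_pow,
      Polynomial.eval_X]
  rw [h]
  exact eval_zero_of_prod hs e j i hi _ (pe_prod hs hS e j i (le_of_lt hi))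

lemma rpol_split (hs : 0 < s) (hS : S.card = s) (j : Fin w) (i : ℕ) (hi : i < s) :
    rpol S s w hs j i = (∑ k ∈ Finset.range (s - i), cpol S s w hs j i k * (X (vmap s w hs j i)) ^ k)
      + (X (vmap s w hs j i) : MvPolynomial (Fin s × Fin w) F) ^ (s - i) := by
  simp only [rpol]
  rw [← Finset.sum_subset (Finset.range_subset_range.mpr (by omega : s - i + 1 ≤ s + 1))
    (fun k _ hk => by
      rw [cpol_eq_zero hs hS j i k (by simp only [Finset.mem_range] at hk ⊢; omega), zero_mul])]
  rw [Finset.sum_range_succ, cpol_lead hs hS j i (le_of_lt hi), one_mul]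

variable (s w) in
/-- staircase exponent vectors -/
def Stair (β : Fin s × Fin w →₀ ℕ) : Prop := ∀ p, β p + (p.1 : ℕ) ≤ s - 1

variable (s w) in
def Deg (β : Fin s × Fin w →₀ ℕ) : ℕ := ∑ p, β p

variable (s w) in
def Wt (β : Fin s × Fin w →₀ ℕ) : ℕ := ∑ p, β p * ((p.1 : ℕ) + 1)

lemma Deg_add (a b : Fin s × Fin w →₀ ℕ) : Deg s w (a + b) = Deg s w a + Deg s w b := by
  simp [Deg, Finsupp.add_apply, Finset.sum_add_distrib]

lemma Wt_add (a b : Fin s × Fin w →₀ ℕ) : Wt s w (a + b) = Wt s w a + Wt s w b := by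
  simp [Wt, Finsupp.add_apply, add_mul, Finset.sum_add_distrib]

lemma Deg_single (p : Fin s × Fin w) (k : ℕ) : Deg s w (Finsupp.single p k) = k := by
  simp [Deg, Finsupp.single_apply]

lemma Wt_single (p : Fin s × Fin w) (k : ℕ) :
    Wt s w (Finsupp.single p k) = k * ((p.1 : ℕ) + 1) := by
  simp only [Wt, Finsupp.single_apply]
  rw [Finset.sum_eq_single p]
  · simp
  · intro q _ hq; simp [Ne.symm hq]
  · simp

lemma Deg_eq_sum (β : Fin s × Fin w →₀ ℕ) : (β.sum fun _ e => e) = Deg s w β :=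
  Finsupp.sum_fintype _ _ (fun _ => rfl)

lemma red_mono (hs : 0 < s) (hS : S.card = s) :
    ∀ n W : ℕ, ∀ α : Fin s × Fin w →₀ ℕ, Deg s w α ≤ n → Wt s w α ≤ W →
      ∃ P' : MvPolynomial (Fin s × Fin w) F,
        (∀ β ∈ P'.support, Stair s w β ∧ Deg s w β ≤ Deg s w α) ∧
        (∀ e : Edom S s w, eval (θ s w e) P' = eval (θ s w e) (monomial α 1)) := by
  intro n
  induction n using Nat.strong_induction_on with
  | _ n ihn =>
  intro W
  induction W using Nat.strong_induction_on with
  | _ W ihW =>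
  intro α hdeg hwt
  by_cases hst : Stair s w α
  · refine ⟨monomial α 1, fun β hβ => ?_, fun e => rfl⟩
    have hβ' : β = α := Finset.mem_singleton.mp (MvPolynomial.support_monomial_subset hβ)
    subst hβ'
    exact ⟨hst, le_rfl⟩
  · simp only [Stair, not_forall, not_le] at hst
    obtain ⟨p, hp⟩ := hst
    set i : ℕ := (p.1 : ℕ) with hidef
    have hilt : i < s := p.1.isLt
    have hge : s - i ≤ α p := by omega
    have hpos : 0 < s - i := by omega
    have hpvm : vmap s w hs p.2 i = p := by
      simp only [vmap]
      exact Prod.ext (Fin.ext (Nat.mod_eq_of_lt hilt)) rfl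
    set α' : Fin s × Fin w →₀ ℕ := α - Finsupp.single p (s - i) with hα'
    have hsplit : α = α' + Finsupp.single p (s - i) := by
      ext q
      simp only [hα', Finsupp.add_apply, Finsupp.tsub_apply, Finsupp.single_apply]
      by_cases hq : p = q
      · subst hq; rw [if_pos rfl]; omega
      · simp [hq]
    set N : MvPolynomial (Fin s × Fin w) F :=
      ∑ k ∈ Finset.range (s - i), cpol S s w hs p.2 i k * (X p) ^ k with hN
    have hXpow : ∀ e : Edom S s w,
        eval (θ s w e) ((X p : MvPolynomial (Fin s × Fin w) F) ^ (s - i))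
          = eval (θ s w e) (-N) := by
      intro e
      have h0 := rpol_eval_zero hs hS e p.2 i hilt
      rw [rpol_split hs hS p.2 i hilt, hpvm, map_add] at h0
      rw [map_neg]
      exact eq_neg_of_add_eq_zero_right h0
    have hmono : ∀ e : Edom S s w, eval (θ s w e) (monomial α (1 : F))
        = eval (θ s w e) ((-N) * monomial α' 1) := by
      intro e
      conv_lhs => rw [hsplit]
      have hmm : monomial (α' + Finsupp.single p (s - i)) (1 : F)
          = monomial α' 1 * (X p) ^ (s - i) := by
        rw [MvPolynomial.X_pow_eq_monomial, MvPolynomial.monomial_mul, mul_one]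
      rw [hmm, map_mul, map_mul, hXpow e]
      ring
    set P1 := (-N) * monomial α' (1 : F) with hP1
    have key : ∀ β ∈ P1.support, ∃ k δ, k < s - i ∧
        δ ∈ (cpol S s w hs p.2 i k : MvPolynomial (Fin s × Fin w) F).support ∧
        β = δ + Finsupp.single p k + α' := by
      intro β hβ
      have h1 := MvPolynomial.support_mul _ _ hβ
      rw [Finset.mem_add] at h1
      obtain ⟨γ, hγ, a', ha', hba⟩ := h1
      have ha'2 : a' = α' := Finset.mem_singleton.mp (MvPolynomial.support_monomial_subset ha')
      rw [MvPolynomial.support_neg] at hγ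
      have h2 := MvPolynomial.support_sum hγ
      rw [Finset.mem_biUnion] at h2
      obtain ⟨k, hk, hγk⟩ := h2
      rw [Finset.mem_range] at hk
      have h3 := MvPolynomial.support_mul _ _ hγk
      rw [Finset.mem_add] at h3
      obtain ⟨δ, hδ, m, hm, hγm⟩ := h3
      rw [MvPolynomial.support_X_pow] at hm
      have hm2 : m = Finsupp.single p k := Finset.mem_singleton.mp hm
      exact ⟨k, δ, hk, hδ, by rw [← hba, ← hγm, ha'2, hm2]⟩
    have hmeasure : ∀ β ∈ P1.support, Deg s w β ≤ Deg s w α ∧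
        (Deg s w β = Deg s w α → Wt s w β < Wt s w α) := by
      intro β hβ
      obtain ⟨k, δ, hk, hδ, hβeq⟩ := key β hβ
      have hδdeg : Deg s w δ ≤ s - i - k := by
        rw [← Deg_eq_sum]
        exact le_trans (MvPolynomial.le_totalDegree hδ) (cpol_totalDegree hs hS p.2 i k)
      have hδvars : ∀ q, δ q ≠ 0 → q.2 = p.2 ∧ (q.1 : ℕ) < i := by
        intro q hq
        exact cpol_vars hs p.2 i (le_of_lt hilt) k q
          ((MvPolynomial.mem_vars q).mpr ⟨δ, hδ, Finsupp.mem_support_iff.mpr hq⟩)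
      have hδwt : Wt s w δ ≤ i * Deg s w δ := by
        rw [Wt, Deg, Finset.mul_sum]
        refine Finset.sum_le_sum fun q _ => ?_
        by_cases hq : δ q = 0
        · simp [hq]
        · have := (hδvars q hq).2
          calc δ q * ((q.1 : ℕ) + 1) ≤ δ q * i := by
                refine Nat.mul_le_mul_left _ ?_; omega
            _ = i * δ q := Nat.mul_comm _ _
      have hDegβ : Deg s w β = Deg s w δ + k + Deg s w α' := by
        rw [hβeq, Deg_add, Deg_add, Deg_single]
      have hDegα : Deg s w α = Deg s w α' + (s - i) := by
        conv_lhs => rw [hsplit]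
        rw [Deg_add, Deg_single]
      constructor
      · omega
      · intro hEq
        have hδdeg' : Deg s w δ + k = s - i := by omega
        have hWtβ : Wt s w β = Wt s w δ + k * (i + 1) + Wt s w α' := by
          rw [hβeq, Wt_add, Wt_add, Wt_single]
        have hWtα : Wt s w α = Wt s w α' + (s - i) * (i + 1) := by
          conv_lhs => rw [hsplit]
          rw [Wt_add, Wt_single]
        obtain ⟨M, hM⟩ : ∃ M, s - i = M + k := ⟨s - i - k, by omega⟩
        have hMpos : 0 < M := by omega
        have hδdegM : Deg s w δ = M := by omega
        have hwtbd : Wt s w δ ≤ i * M := by rw [← hδdegM]; exact hδwt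
        have hexp : (M + k) * (i + 1) = M * i + M + k * (i + 1) := by ring
        have hiM : i * M = M * i := Nat.mul_comm _ _
        have hm2 : (s - i) * (i + 1) = (M + k) * (i + 1) := by rw [hM]
        omega
    have hchoice : ∀ β ∈ P1.support,
        ∃ P' : MvPolynomial (Fin s × Fin w) F,
          (∀ β' ∈ P'.support, Stair s w β' ∧ Deg s w β' ≤ Deg s w α) ∧
          (∀ e : Edom S s w, eval (θ s w e) P' = eval (θ s w e) (monomial β 1)) := by
      intro β hβ
      obtain ⟨hle, himp⟩ := hmeasure β hβ
      rcases lt_or_eq_of_le hle with hlt | heq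
      · obtain ⟨P', h1, h2⟩ := ihn (Deg s w β) (lt_of_lt_of_le hlt hdeg) (Wt s w β) β le_rfl le_rfl
        exact ⟨P', fun β' hβ' => ⟨(h1 β' hβ').1, le_trans (h1 β' hβ').2 hle⟩, h2⟩
      · have hwlt : Wt s w β < Wt s w α := himp heq
        obtain ⟨P', h1, h2⟩ := ihW (Wt s w β) (lt_of_lt_of_le hwlt hwt) β (by omega) le_rfl
        exact ⟨P', fun β' hβ' => ⟨(h1 β' hβ').1, le_trans (h1 β' hβ').2 hle⟩, h2⟩
    choose g hg1 hg2 using hchoice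
    refine ⟨∑ β ∈ P1.support.attach, coeff (β : Fin s × Fin w →₀ ℕ) P1 • g (↑β) β.2, ?_, ?_⟩
    · intro β' hβ'
      have h1 := MvPolynomial.support_sum hβ'
      rw [Finset.mem_biUnion] at h1
      obtain ⟨β, _, hβ'2⟩ := h1
      exact hg1 (↑β) β.2 β' (MvPolynomial.support_smul hβ'2)
    · intro e
      rw [map_sum]
      have hterm : ∀ β ∈ P1.support.attach,
          eval (θ s w e) (coeff (β : Fin s × Fin w →₀ ℕ) P1 • g (↑β) β.2)
            = coeff (β : Fin s × Fin w →₀ ℕ) P1 * eval (θ s w e) (monomial (↑β) 1) := by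
        intro β _
        rw [MvPolynomial.smul_eq_C_mul, map_mul, eval_C, hg2]
      rw [Finset.sum_congr rfl hterm]
      rw [Finset.sum_attach P1.support
        (fun β => coeff β P1 * eval (θ s w e) (monomial β 1))]
      have heP1 : eval (θ s w e) P1
          = ∑ β ∈ P1.support, coeff β P1 * eval (θ s w e) (monomial β 1) := by
        conv_lhs => rw [← MvPolynomial.support_sum_monomial_coeff P1]
        rw [map_sum]
        refine Finset.sum_congr rfl fun β _ => ?_
        have : monomial β (coeff β P1) = C (coeff β P1) * monomial β 1 := by
          rw [MvPolynomial.C_mul_monomial, mul_one]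
        rw [this, map_mul, eval_C]
      rw [← heP1, ← hmono e]

/-- reduction of an arbitrary polynomial to the staircase span -/
lemma redP (hs : 0 < s) (hS : S.card = s) (P : MvPolynomial (Fin s × Fin w) F) :
    ∃ P' : MvPolynomial (Fin s × Fin w) F,
      (∀ β ∈ P'.support, Stair s w β ∧ Deg s w β ≤ P.totalDegree) ∧
      (∀ e : Edom S s w, eval (θ s w e) P' = eval (θ s w e) P) := by
  have hchoice : ∀ α ∈ P.support,
      ∃ P' : MvPolynomial (Fin s × Fin w) F,
        (∀ β ∈ P'.support, Stair s w β ∧ Deg s w β ≤ P.totalDegree) ∧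
        (∀ e : Edom S s w, eval (θ s w e) P' = eval (θ s w e) (monomial α 1)) := by
    intro α hα
    obtain ⟨P', h1, h2⟩ := red_mono hs hS (Deg s w α) (Wt s w α) α le_rfl le_rfl
    have hα' : Deg s w α ≤ P.totalDegree := by
      rw [← Deg_eq_sum]; exact MvPolynomial.le_totalDegree hα
    exact ⟨P', fun β hβ => ⟨(h1 β hβ).1, le_trans (h1 β hβ).2 hα'⟩, h2⟩
  choose g hg1 hg2 using hchoice
  refine ⟨∑ α ∈ P.support.attach, coeff (α : Fin s × Fin w →₀ ℕ) P • g (↑α) α.2, ?_, ?_⟩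
  · intro β' hβ'
    have h1 := MvPolynomial.support_sum hβ'
    rw [Finset.mem_biUnion] at h1
    obtain ⟨α, _, hβ'2⟩ := h1
    exact hg1 (↑α) α.2 β' (MvPolynomial.support_smul hβ'2)
  · intro e
    rw [map_sum]
    have hterm : ∀ α ∈ P.support.attach,
        eval (θ s w e) (coeff (α : Fin s × Fin w →₀ ℕ) P • g (↑α) α.2)
          = coeff (α : Fin s × Fin w →₀ ℕ) P * eval (θ s w e) (monomial (↑α) 1) := by
      intro α _
      rw [MvPolynomial.smul_eq_C_mul, map_mul, eval_C, hg2]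
    rw [Finset.sum_congr rfl hterm]
    rw [Finset.sum_attach P.support (fun α => coeff α P * eval (θ s w e) (monomial α 1))]
    conv_rhs => rw [← MvPolynomial.support_sum_monomial_coeff P]
    rw [map_sum]
    refine Finset.sum_congr rfl fun α _ => ?_
    have : monomial α (coeff α P) = C (coeff α P) * monomial α 1 := by
      rw [MvPolynomial.C_mul_monomial, mul_one]
    rw [this, map_mul, eval_C]

variable (S s w) in
/-- interpolation indicator polynomial for a domain point. -/
noncomputable def chi (e₀ : Edom S s w) : MvPolynomial (Fin s × Fin w) F :=
  ∏ p : Fin s × Fin w, ∏ a ∈ S.erase (θ s w e₀ p), (X p - C a)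

lemma eval_chi_self (e₀ : Edom S s w) : eval (θ s w e₀) (chi S s w e₀) ≠ 0 := by
  rw [chi, map_prod]
  rw [Finset.prod_ne_zero_iff]
  intro p _
  rw [map_prod, Finset.prod_ne_zero_iff]
  intro a ha
  rw [map_sub, eval_X, eval_C]
  exact sub_ne_zero.mpr (Ne.symm (Finset.mem_erase.mp ha).1)

lemma eval_chi_ne (e e₀ : Edom S s w) (h : e ≠ e₀) : eval (θ s w e) (chi S s w e₀) = 0 := by
  have hj : ∃ j, e j ≠ e₀ j := Function.ne_iff.mp h
  obtain ⟨j, hj⟩ := hj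
  have hi : ∃ i, e j i ≠ e₀ j i := by
    by_contra hcon
    push_neg at hcon
    exact hj (Equiv.ext hcon)
  obtain ⟨i, hi⟩ := hi
  rw [chi, map_prod]
  refine Finset.prod_eq_zero (Finset.mem_univ ((i, j) : Fin s × Fin w)) ?_
  rw [map_prod]
  refine Finset.prod_eq_zero (i := θ s w e (i, j)) ?_ ?_
  · refine Finset.mem_erase.mpr ⟨?_, (e j i).2⟩
    exact Subtype.coe_injective.ne hi
  · rw [map_sub, eval_X, eval_C, sub_self]

variable (s w) in
/-- index type for staircase monomials. -/
abbrev Kdom := (p : Fin s × Fin w) → Fin (s - (p.1 : ℕ))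

variable (s w) in
noncomputable def iota (κ : Kdom s w) : Fin s × Fin w →₀ ℕ :=
  Finsupp.equivFunOnFinite.symm (fun p => (κ p : ℕ))

lemma iota_apply (κ : Kdom s w) (p : Fin s × Fin w) : iota s w κ p = (κ p : ℕ) := rfl

lemma iota_injective : Function.Injective (iota s w) := by
  intro a b hab
  funext p
  have := congrArg (fun f => f p) hab
  simpa [iota, Fin.ext_iff] using this

lemma stair_mem_range (β : Fin s × Fin w →₀ ℕ) (hs : 0 < s) (hβ : Stair s w β) :
    ∃ κ : Kdom s w, iota s w κ = β := by
  have hlt : ∀ p : Fin s × Fin w, β p < s - (p.1 : ℕ) := by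
    intro p
    have h1 := hβ p
    have h2 : (p.1 : ℕ) < s := p.1.isLt
    omega
  refine ⟨fun p => ⟨β p, hlt p⟩, ?_⟩
  ext p
  rfl

lemma eval_staircase_sum (hs : 0 < s) (P : MvPolynomial (Fin s × Fin w) F)
    (hP : ∀ β ∈ P.support, Stair s w β) (e : Edom S s w) :
    ∑ κ : Kdom s w, coeff (iota s w κ) P * eval (θ s w e) (monomial (iota s w κ) 1)
      = eval (θ s w e) P := by
  have hrhs : eval (θ s w e) P
      = ∑ β ∈ P.support, coeff β P * eval (θ s w e) (monomial β 1) := by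
    conv_lhs => rw [← MvPolynomial.support_sum_monomial_coeff P]
    rw [map_sum]
    refine Finset.sum_congr rfl fun β _ => ?_
    have : monomial β (coeff β P) = C (coeff β P) * monomial β 1 := by
      rw [MvPolynomial.C_mul_monomial, mul_one]
    rw [this, map_mul, eval_C]
  rw [hrhs]
  have himg : ∑ β ∈ Finset.image (iota s w) Finset.univ,
        (fun β => coeff β P * eval (θ s w e) (monomial β 1)) β
      = ∑ κ ∈ (Finset.univ : Finset (Kdom s w)),
        (fun β => coeff β P * eval (θ s w e) (monomial β 1)) (iota s w κ) :=
    Finset.sum_image (fun x _ y _ h => iota_injective h)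
  rw [← himg]
  refine (Finset.sum_subset ?_ ?_).symm
  · intro β hβ
    obtain ⟨κ, hκ⟩ := stair_mem_range β hs (hP β hβ)
    exact Finset.mem_image.mpr ⟨κ, Finset.mem_univ κ, hκ⟩
  · intro β _ hβ
    rw [MvPolynomial.notMem_support_iff.mp hβ, zero_mul]

variable (S s w) in
/-- evaluation of staircase span, as a linear map in coordinates. -/
noncomputable def Phi : ((Kdom s w) → F) →ₗ[F] ((Edom S s w) → F) where
  toFun c := fun e => ∑ κ : Kdom s w, c κ * eval (θ s w e) (monomial (iota s w κ) 1)
  map_add' a b := by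
    funext e
    simp [add_mul, Finset.sum_add_distrib]
  map_smul' m a := by
    funext e
    simp [Finset.mul_sum, mul_assoc]

lemma Phi_surjective (hs : 0 < s) (hS : S.card = s) :
    Function.Surjective (Phi S s w (F := F)) := by
  intro f
  set Pf : MvPolynomial (Fin s × Fin w) F :=
    ∑ e₀ : Edom S s w, C (f e₀ * (eval (θ s w e₀) (chi S s w e₀))⁻¹) * chi S s w e₀ with hPfdef
  have hPf : ∀ e, eval (θ s w e) Pf = f e := by
    intro e
    rw [hPfdef, map_sum, Finset.sum_eq_single e]
    · rw [map_mul, eval_C]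
      field_simp [eval_chi_self e]
    · intro e₀ _ hne
      rw [map_mul, eval_chi_ne e e₀ (Ne.symm hne), mul_zero]
    · intro h
      exact absurd (Finset.mem_univ e) h
  obtain ⟨P', hP'1, hP'2⟩ := redP hs hS Pf
  refine ⟨fun κ => coeff (iota s w κ) P', ?_⟩
  funext e
  show ∑ κ : Kdom s w, coeff (iota s w κ) P' * eval (θ s w e) (monomial (iota s w κ) 1) = f e
  rw [eval_staircase_sum hs P' (fun β hβ => (hP'1 β hβ).1) e, hP'2, hPf]

lemma prod_sub_factorial (s : ℕ) : ∏ i ∈ Finset.range s, (s - i) = Nat.factorial s := by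
  rw [← Finset.prod_range_add_one_eq_factorial]
  rw [← Finset.prod_range_reflect (fun j => j + 1) s]
  refine Finset.prod_congr rfl fun j hj => ?_
  rw [Finset.mem_range] at hj
  omega

lemma card_Kdom : Fintype.card (Kdom s w) = (Nat.factorial s) ^ w := by
  rw [Fintype.card_pi]
  simp only [Fintype.card_fin]
  rw [Fintype.prod_prod_type (f := fun p : Fin s × Fin w => (s - (p.1 : ℕ)))]
  simp only [Finset.prod_const, Finset.card_univ, Fintype.card_fin]
  rw [Finset.prod_pow]
  congr 1
  rw [Fin.prod_univ_eq_prod_range (fun i => s - i) s, prod_sub_factorial]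

lemma card_Edom (hS : S.card = s) :
    Fintype.card (Edom S s w) = (Nat.factorial s) ^ w := by
  rw [Fintype.card_fun]
  have hcard : Fintype.card (Fin s) = Fintype.card {x // x ∈ S} := by
    rw [Fintype.card_coe, hS, Fintype.card_fin]
  rw [Fintype.card_equiv (Fintype.equivOfCardEq hcard)]
  rw [Fintype.card_fin, Fintype.card_fin]

lemma stair_injective_zero (hs : 0 < s) (hS : S.card = s) (P : MvPolynomial (Fin s × Fin w) F)
    (hP : ∀ β ∈ P.support, Stair s w β) (h0 : ∀ e : Edom S s w, eval (θ s w e) P = 0) :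
    P = 0 := by
  have hcard : Fintype.card (Kdom s w) = Fintype.card (Edom S s w) := by
    rw [card_Kdom, card_Edom hS]
  let e' : Kdom s w ≃ Edom S s w := Fintype.equivOfCardEq hcard
  let Ψ : ((Kdom s w) → F) →ₗ[F] ((Kdom s w) → F) :=
    (LinearEquiv.funCongrLeft F F e').toLinearMap.comp (Phi S s w)
  have hΨsurj : Function.Surjective Ψ := by
    intro y
    obtain ⟨x, hx⟩ := Phi_surjective (S := S) (w := w) hs hS
      ((LinearEquiv.funCongrLeft F F e').symm y)
    refine ⟨x, ?_⟩
    show (LinearEquiv.funCongrLeft F F e') (Phi S s w x) = y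
    rw [hx]
    exact (LinearEquiv.funCongrLeft F F e').apply_symm_apply y
  have hΨinj : Function.Injective Ψ := LinearMap.injective_iff_surjective.mpr hΨsurj
  have hPhiinj : Function.Injective (Phi S s w (F := F)) := by
    intro a b hab
    refine hΨinj ?_
    show (LinearEquiv.funCongrLeft F F e').toLinearMap (Phi S s w a)
      = (LinearEquiv.funCongrLeft F F e').toLinearMap (Phi S s w b)
    rw [hab]
  have hzero : Phi S s w (fun κ => coeff (iota s w κ) P) = 0 := by
    funext e
    show ∑ κ : Kdom s w, coeff (iota s w κ) P * eval (θ s w e) (monomial (iota s w κ) 1) = 0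
    rw [eval_staircase_sum hs P hP e, h0]
  have hc : (fun κ => coeff (iota s w κ) P) = (0 : (Kdom s w) → F) := by
    refine hPhiinj ?_
    rw [hzero, map_zero]
  by_contra hne
  obtain ⟨β, hβ⟩ := MvPolynomial.support_nonempty.mpr hne
  obtain ⟨κ, hκ⟩ := stair_mem_range β hs (hP β hβ)
  have := congrFun hc κ
  rw [hκ] at this
  exact MvPolynomial.mem_support_iff.mp hβ this

/-- The core theorem in the `t = s` world. -/
lemma core (hs : 0 < s) (hS : S.card = s) (Qs Rs : MvPolynomial (Fin s × Fin w) F)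
    (hQ0 : Qs ≠ 0) (hQsupp : ∀ β ∈ Qs.support, Stair s w β)
    (hdeg : Rs.totalDegree < Qs.totalDegree)
    (hagree : ∀ e : Edom S s w, eval (θ s w e) Rs = eval (θ s w e) Qs) : False := by
  obtain ⟨R', hR'1, hR'2⟩ := redP hs hS Rs
  have hzero : ∀ e : Edom S s w, eval (θ s w e) (Qs - R') = 0 := fun e => by
    rw [map_sub, hR'2 e, hagree e, sub_self]
  have hst : ∀ β ∈ (Qs - R').support, Stair s w β := by
    intro β hβ
    have h1 := MvPolynomial.support_sub _ Qs R' hβ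
    rcases Finset.mem_union.mp h1 with h | h
    exacts [hQsupp β h, (hR'1 β h).1]
  have hsub0 := stair_injective_zero hs hS _ hst hzero
  have hQR : Qs = R' := sub_eq_zero.mp hsub0
  obtain ⟨β, hβmem, hβdeg⟩ := Finset.exists_mem_eq_sup Qs.support
    (MvPolynomial.support_nonempty.mpr hQ0) (fun β => β.sum fun _ e => e)
  have h1 : Qs.totalDegree = Deg s w β := by
    rw [MvPolynomial.totalDegree, hβdeg, Deg_eq_sum]
  have h2 : β ∈ R'.support := hQR ▸ hβmem
  have h3 := (hR'1 β h2).2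
  omega

/-- renaming along a map that fixes the variables of `P` does nothing. -/
lemma rename_eq_self {σ : Type*} [DecidableEq σ] (P : MvPolynomial σ F) (h : σ → σ)
    (hh : ∀ v ∈ P.vars, h v = v) : rename h P = P := by
  conv_lhs => rw [← MvPolynomial.support_sum_monomial_coeff P]
  rw [map_sum]
  conv_rhs => rw [← MvPolynomial.support_sum_monomial_coeff P]
  refine Finset.sum_congr rfl fun α hα => ?_
  rw [MvPolynomial.rename_monomial]
  congr 1
  rw [Finsupp.mapDomain_congr (g := id) ?_, Finsupp.mapDomain_id]
  intro q hq
  exact hh q ((MvPolynomial.mem_vars q).mpr ⟨α, hα, hq⟩)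

lemma count_mod (T s r m : ℕ) (hr : r < s) (hm : T = s * m) :
    (Finset.univ.filter (fun i : Fin T => (i : ℕ) % s = r)).card = m := by
  subst hm
  have hs : 0 < s := by omega
  have himg : Finset.univ.filter (fun i : Fin (s * m) => (i : ℕ) % s = r)
      = Finset.image (fun q : Fin m =>
          (⟨r + s * (q : ℕ), by
            have h1 : (q : ℕ) + 1 ≤ m := q.isLt
            have h2 : s * ((q : ℕ) + 1) ≤ s * m := Nat.mul_le_mul_left s h1
            have h3 : s * (q : ℕ) + s ≤ s * m := by rw [Nat.mul_add, Nat.mul_one] at h2; omega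
            omega⟩ : Fin (s * m))) Finset.univ := by
    ext i
    simp only [Finset.mem_filter, Finset.mem_univ, true_and, Finset.mem_image]
    constructor
    · intro hmod
      have hq : (i : ℕ) / s < m := by
        have := i.isLt
        exact Nat.div_lt_of_lt_mul (by omega)
      refine ⟨⟨(i : ℕ) / s, hq⟩, ?_⟩
      apply Fin.ext
      show r + s * ((i : ℕ) / s) = (i : ℕ)
      rw [← hmod]
      exact Nat.mod_add_div _ _
    · rintro ⟨q, rfl⟩
      show (r + s * (q : ℕ)) % s = r
      rw [Nat.add_mul_mod_self_left, Nat.mod_eq_of_lt hr]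
  rw [himg, Finset.card_image_of_injective _ ?_, Finset.card_univ, Fintype.card_fin]
  intro q1 q2 h12
  simp only [Fin.mk.injEq] at h12
  have h13 : s * (q1 : ℕ) = s * (q2 : ℕ) := by omega
  exact Fin.ext (Nat.eq_of_mul_eq_mul_left hs h13)

end Stmt11Aux

open Stmt11Aux in
theorem stmt11 {F : Type*} [Field F] [DecidableEq F] (S : Finset F) (s : ℕ)
    (hs : 2 ≤ s) (hS : S.card = s) (t : ℕ) (ht : t = s ^ 3) (w : ℕ) (hw : 1 ≤ w)
    (Q : MvPolynomial (Fin t × Fin w) F) (hQ0 : Q ≠ 0)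
    (hQrow : ∀ v ∈ Q.vars, ((v : Fin t × Fin w).1 : ℕ) = 0)
    (hQind : ∀ v, MvPolynomial.degreeOf v Q ≤ s - 1) :
    ¬ ∃ R : MvPolynomial (Fin t × Fin w) F, R.totalDegree < Q.totalDegree ∧
      ∀ y : Fin t × Fin w → F,
        (∀ j : Fin w, IsBalancedTuple S t (fun i => y (i, j))) →
        MvPolynomial.eval y R = MvPolynomial.eval y Q := by
  rintro ⟨R, hRdeg, hRagree⟩
  have hs0 : 0 < s := by omega
  have ht0 : 0 < t := by rw [ht]; positivity
  -- maps between variable worlds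
  set fmap : Fin t × Fin w → Fin s × Fin w :=
    fun v => (⟨(v.1 : ℕ) % s, Nat.mod_lt _ hs0⟩, v.2) with hfmap
  set u : Fin w → Fin t × Fin w := fun j => (⟨0, ht0⟩, j) with hu
  set u' : Fin w → Fin s × Fin w := fun j => (⟨0, hs0⟩, j) with hu'
  have huinj : Function.Injective u := by
    intro a b hab; simpa [hu, Prod.ext_iff] using hab
  have hu'inj : Function.Injective u' := by
    intro a b hab; simpa [hu', Prod.ext_iff] using hab
  set Q₀ : MvPolynomial (Fin w) F := rename Prod.snd Q with hQ₀
  have hQu : rename u Q₀ = Q := by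
    rw [hQ₀, rename_rename]
    refine rename_eq_self Q _ fun v hv => ?_
    have h0 := hQrow v hv
    show ((⟨0, ht0⟩ : Fin t), v.2) = v
    refine Prod.ext ?_ rfl
    exact Fin.ext (by simp [h0])
  set Qs : MvPolynomial (Fin s × Fin w) F := rename fmap Q with hQsdef
  set Rs : MvPolynomial (Fin s × Fin w) F := rename fmap R with hRsdef
  have hcomp : fmap ∘ u = u' := by
    funext j
    simp only [hfmap, hu, hu', Function.comp]
    refine Prod.ext (Fin.ext ?_) rfl
    simp
  have hQs : Qs = rename u' Q₀ := by
    rw [hQsdef, ← hQu, rename_rename, hcomp]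
  have hQ₀s : rename Prod.snd Qs = Q₀ := by
    rw [hQs, rename_rename]
    have hcomp : (Prod.snd ∘ u' : Fin w → Fin w) = id := by
      funext j; rfl
    rw [hcomp, rename_id, AlgHom.id_apply]
  -- degrees
  have hd1 : Q₀.totalDegree ≤ Q.totalDegree := MvPolynomial.totalDegree_rename_le _ _
  have hd2 : Q.totalDegree ≤ Q₀.totalDegree := by
    conv_lhs => rw [← hQu]
    exact MvPolynomial.totalDegree_rename_le _ _
  have hd3 : Qs.totalDegree ≤ Q₀.totalDegree := by
    rw [hQs]; exact MvPolynomial.totalDegree_rename_le _ _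
  have hd4 : Q₀.totalDegree ≤ Qs.totalDegree := by
    conv_lhs => rw [← hQ₀s]
    exact MvPolynomial.totalDegree_rename_le _ _
  have hQsdeg : Qs.totalDegree = Q.totalDegree := by omega
  have hQs0 : Qs ≠ 0 := by
    intro hcon
    apply hQ0
    rw [← hQu]
    have : Q₀ = 0 := by rw [← hQ₀s, hcon, map_zero]
    rw [this, map_zero]
  -- staircase support of Qs
  have hstair : ∀ β ∈ Qs.support, Stair s w β := by
    intro β hβ
    have hcoeff : MvPolynomial.coeff β Qs ≠ 0 := MvPolynomial.mem_support_iff.mp hβ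
    rw [hQs] at hcoeff
    obtain ⟨γ, hγmap, hγcoeff⟩ := MvPolynomial.coeff_rename_ne_zero _ _ _ hcoeff
    intro p
    by_cases hp0 : (p.1 : ℕ) = 0
    · have hpu : p = u' p.2 := Prod.ext (Fin.ext (by simp [hu', hp0])) rfl
      have hβp : β p = γ p.2 := by
        rw [← hγmap, hpu]
        exact Finsupp.mapDomain_apply hu'inj γ p.2
      have hγle : γ p.2 ≤ MvPolynomial.degreeOf p.2 Q₀ := by
        rw [MvPolynomial.degreeOf_eq_sup]
        exact Finset.le_sup (f := fun m => m p.2) (MvPolynomial.mem_support_iff.mpr hγcoeff)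
      have hdegeq : MvPolynomial.degreeOf p.2 Q₀ = MvPolynomial.degreeOf (u p.2) Q := by
        conv_rhs => rw [← hQu]
        rw [MvPolynomial.degreeOf_rename_of_injective huinj]
      have := hQind (u p.2)
      omega
    · have hβp : β p = 0 := by
        rw [← hγmap]
        refine Finsupp.mapDomain_notin_range _ _ ?_
        rintro ⟨j, hj⟩
        apply hp0
        rw [← hj]
      have hlt : (p.1 : ℕ) < s := p.1.isLt
      omega
  -- agreement on domain points
  have hagree : ∀ e : Edom S s w, MvPolynomial.eval (θ s w e) Rs = MvPolynomial.eval (θ s w e) Qs := by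
    intro e
    rw [hQsdef, hRsdef, MvPolynomial.eval_rename, MvPolynomial.eval_rename]
    refine hRagree (θ s w e ∘ fmap) fun j => ?_
    constructor
    · intro i
      exact (e j _).2
    · intro a ha
      set i₀ : Fin s := (e j).symm ⟨a, ha⟩ with hi₀
      have hfilter : Finset.univ.filter (fun i : Fin t => (θ s w e ∘ fmap) (i, j) = a)
          = Finset.univ.filter (fun i : Fin t => (i : ℕ) % s = (i₀ : ℕ)) := by
        ext i
        simp only [Finset.mem_filter, Finset.mem_univ, true_and]
        show (((e j ⟨(i : ℕ) % s, Nat.mod_lt _ hs0⟩ : {x // x ∈ S}) : F) = a) ↔ _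
        constructor
        · intro hh
          have h1 : e j ⟨(i : ℕ) % s, Nat.mod_lt _ hs0⟩ = ⟨a, ha⟩ := Subtype.ext hh
          have h2 : (⟨(i : ℕ) % s, Nat.mod_lt _ hs0⟩ : Fin s) = i₀ :=
            ((e j).apply_eq_iff_eq_symm_apply).mp h1
          exact congrArg Fin.val h2
        · intro hh
          have h2 : (⟨(i : ℕ) % s, Nat.mod_lt _ hs0⟩ : Fin s) = i₀ := Fin.ext hh
          have h1 : e j ⟨(i : ℕ) % s, Nat.mod_lt _ hs0⟩ = ⟨a, ha⟩ := by
            rw [h2, hi₀, Equiv.apply_symm_apply]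
          exact congrArg Subtype.val h1
      rw [hfilter, hS]
      have hts : t / s = s ^ 2 := by
        rw [ht, pow_succ, Nat.mul_div_cancel _ hs0]
      rw [hts]
      exact count_mod t s (i₀ : ℕ) (s ^ 2) i₀.isLt (by rw [ht]; ring)
  -- Rs degree bound and conclusion
  have hRsdeg : Rs.totalDegree < Qs.totalDegree := by
    have := MvPolynomial.totalDegree_rename_le fmap R
    rw [← hRsdef] at this
    omega
  exact core hs0 hS Qs Rs hQs0 hstair hRsdeg hagree
end
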